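/- arXiv:1110.1791 — 3 statements merged into one kernel-verified Lean document; each statement's English description precedes it below -/
import Mathlib

section
/- Assume conditions (P) and (S). Then the set 𝒟^(1) has the following explicit form: (i) if γ₂(θ^(1,max)) > 0 and θ^(1,r)₁ ≤ θ^(2,max)₁, then 𝒟^(1) = {θ ∈ ℝ² : θ < θ̃^(1,r) componentwise}; (ii) if γ₂(θ^(1,max)) > 0 and θ^(1,r)₁ > θ^(2,max)₁, then 𝒟^(1) = Γ_max ∩ {θ ∈ ℝ² : θ₁ < θ̃^(1,r)₁}; (iii) if γ₂(θ^(1,max)) ≤ 0, then 𝒟^(1) = Γ_max. -/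
set_option maxHeartbeats 1000000

open Matrix Set

noncomputable section

abbrev V : Type := Fin 2 → ℝ

def gam (S : Matrix (Fin 2) (Fin 2) ℝ) (μ : V) (θ : V) : ℝ :=
  -(1/2) * (θ ⬝ᵥ S.mulVec θ) - μ ⬝ᵥ θ

def gam1 (R : Matrix (Fin 2) (Fin 2) ℝ) (θ : V) : ℝ := R 0 0 * θ 0 + R 1 0 * θ 1
def gam2 (R : Matrix (Fin 2) (Fin 2) ℝ) (θ : V) : ℝ := R 0 1 * θ 0 + R 1 1 * θ 1

def condP (R : Matrix (Fin 2) (Fin 2) ℝ) : Prop :=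
  0 < R 0 0 ∧ 0 < R 1 1 ∧ 0 < R 0 0 * R 1 1 - R 0 1 * R 1 0

def condS (μ : V) (R : Matrix (Fin 2) (Fin 2) ℝ) : Prop :=
  R 1 1 * μ 0 - R 0 1 * μ 1 < 0 ∧ R 0 0 * μ 1 - R 1 0 * μ 0 < 0

def pvec1 (R : Matrix (Fin 2) (Fin 2) ℝ) : V := ![R 1 1, -(R 0 1)]
def pvec2 (R : Matrix (Fin 2) (Fin 2) ℝ) : V := ![-(R 1 0), R 0 0]

def θray1 (S : Matrix (Fin 2) (Fin 2) ℝ) (μ : V) (R : Matrix (Fin 2) (Fin 2) ℝ) : V :=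
  (-2 * (μ ⬝ᵥ pvec1 R) / (pvec1 R ⬝ᵥ S.mulVec (pvec1 R))) • pvec1 R

def θray2 (S : Matrix (Fin 2) (Fin 2) ℝ) (μ : V) (R : Matrix (Fin 2) (Fin 2) ℝ) : V :=
  (-2 * (μ ⬝ᵥ pvec2 R) / (pvec2 R ⬝ᵥ S.mulVec (pvec2 R))) • pvec2 R

def Gam (S : Matrix (Fin 2) (Fin 2) ℝ) (μ : V) : Set V := {θ | 0 < gam S μ θ}

def ltc (θ θ' : V) : Prop := ∀ i, θ i < θ' i

def Gmax (S : Matrix (Fin 2) (Fin 2) ℝ) (μ : V) : Set V :=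
  {θ | ∃ θ' ∈ Gam S μ, ltc θ θ'}

def Dset (S : Matrix (Fin 2) (Fin 2) ℝ) (μ : V) (i : Fin 2) (c : ℝ) : Set V :=
  {θ | ∃ θ' ∈ Gam S μ, ltc θ θ' ∧ θ' i < c}

/-! ### Scalar auxiliary theory -/

def Gs (a b d m0 m1 x y : ℝ) : ℝ :=
  -(1/2)*(a*x^2 + 2*b*x*y + d*y^2) - m0*x - m1*y

lemma DM_qf_nonneg (a b d x y : ℝ) (ha : 0 < a) (hdet : 0 < a*d - b^2) :
    0 ≤ a*x^2 + 2*b*x*y + d*y^2 := by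
  nlinarith [sq_nonneg (a*x + b*y), mul_nonneg hdet.le (sq_nonneg y)]

lemma DM_qf_pos (a b d x y : ℝ) (ha : 0 < a) (hdet : 0 < a*d - b^2)
    (hxy : ¬(x = 0 ∧ y = 0)) : 0 < a*x^2 + 2*b*x*y + d*y^2 := by
  by_cases hy : y = 0
  · subst hy
    have hx : x ≠ 0 := fun h => hxy ⟨h, rfl⟩
    have : 0 < x^2 := by positivity
    nlinarith
  · have : 0 < y^2 := by positivity
    nlinarith [sq_nonneg (a*x + b*y), mul_pos hdet this]

lemma DM_pair_eq (a b d m0 m1 x1 y1 x2 y2 : ℝ)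
    (h1 : Gs a b d m0 m1 x1 y1 = 0) (h2 : Gs a b d m0 m1 x2 y2 = 0) :
    (a*x1+b*y1+m0)*(x2-x1) + (b*x1+d*y1+m1)*(y2-y1)
      = -(1/2)*(a*(x2-x1)^2 + 2*b*(x2-x1)*(y2-y1) + d*(y2-y1)^2) := by
  simp only [Gs] at h1 h2
  linear_combination h1 - h2

lemma DM_pair_lt (a b d m0 m1 x1 y1 x2 y2 : ℝ) (ha : 0 < a) (hdet : 0 < a*d - b^2)
    (h1 : Gs a b d m0 m1 x1 y1 = 0) (h2 : Gs a b d m0 m1 x2 y2 = 0)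
    (hne : ¬(x2 = x1 ∧ y2 = y1)) :
    (a*x1+b*y1+m0)*(x2-x1) + (b*x1+d*y1+m1)*(y2-y1) < 0 := by
  rw [DM_pair_eq a b d m0 m1 x1 y1 x2 y2 h1 h2]
  have hq : 0 < a*(x2-x1)^2 + 2*b*(x2-x1)*(y2-y1) + d*(y2-y1)^2 := by
    apply DM_qf_pos a b d _ _ ha hdet
    rintro ⟨hx, hy⟩
    exact hne ⟨by linarith [sub_eq_zero.mp hx], by linarith [sub_eq_zero.mp hy]⟩
  linarith

lemma DM_star (a b d m0 m1 x y : ℝ) (h : Gs a b d m0 m1 x y = 0) :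
    (a*x+b*y+m0)*x + (b*x+d*y+m1)*y = (1/2)*(a*x^2 + 2*b*x*y + d*y^2) := by
  simp only [Gs] at h
  linear_combination -h

lemma DM_root (a k G0 : ℝ) (ha : 0 < a) (hG : 0 < G0) :
    ∃ s : ℝ, 0 < s ∧ (1/2)*a*s^2 + k*s = G0 := by
  have hpos : (0:ℝ) ≤ k^2 + 2*a*G0 := by nlinarith [sq_nonneg k]
  have hsq : Real.sqrt (k^2 + 2*a*G0) ^ 2 = k^2 + 2*a*G0 := Real.sq_sqrt hpos
  have hgt : k < Real.sqrt (k^2 + 2*a*G0) := by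
    nlinarith [Real.sqrt_nonneg (k^2 + 2*a*G0)]
  refine ⟨(Real.sqrt (k^2 + 2*a*G0) - k)/a, div_pos (by linarith) ha, ?_⟩
  field_simp
  nlinarith [hsq]

lemma DM_lt_max (a b d m0 m1 X : ℝ) (ha : 0 < a)
    (hmax : ∀ x y, Gs a b d m0 m1 x y = 0 → x ≤ X) :
    ∀ x y, 0 < Gs a b d m0 m1 x y → x < X := by
  intro x y hin
  obtain ⟨s, hs, hr⟩ := DM_root a (a*x+b*y+m0) (Gs a b d m0 m1 x y) ha hin
  have hb : Gs a b d m0 m1 (x+s) y = 0 := by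
    simp only [Gs] at hr ⊢
    linear_combination -hr
  have := hmax (x+s) y hb
  linarith

lemma DM_root2 (d A C : ℝ) (hd : 0 < d) (hΔ : 0 ≤ A^2 - 2*d*C) :
    ∃ s : ℝ, (1/2)*d*s^2 + A*s + C = 0 := by
  refine ⟨(-A + Real.sqrt (A^2 - 2*d*C))/d, ?_⟩
  have hsq : Real.sqrt (A^2 - 2*d*C) ^ 2 = A^2 - 2*d*C := Real.sq_sqrt hΔ
  field_simp
  nlinarith [hsq]

lemma DM_perturb (a b d m0 m1 X Y n0 n1 : ℝ) (hd : 0 < d)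
    (hdet : 0 < a*d - b^2)
    (hG : Gs a b d m0 m1 X Y = 0)
    (hn0 : n0 = a*X + b*Y + m0) (hn1 : n1 = b*X + d*Y + m1)
    (h1 : n1 ≠ 0) : ∃ ε s : ℝ, 0 < ε ∧ Gs a b d m0 m1 (X+ε) (Y+s) = 0 := by
  have hn1sq : 0 < n1^2 := by positivity
  obtain ⟨ε, hε, hε2, hεc⟩ : ∃ ε : ℝ, 0 < ε ∧ ε^2 ≤ ε ∧
      ε*(2*|b*n1 - d*n0| + (a*d - b^2) + 1) ≤ n1^2/2 := by
    have hc1 : 0 < 2*|b*n1 - d*n0| + (a*d - b^2) + 1 := by positivity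
    refine ⟨min 1 (n1^2/(2*(2*|b*n1 - d*n0| + (a*d - b^2) + 1))),
      lt_min one_pos (by positivity), ?_, ?_⟩
    · have h1' : min 1 (n1^2/(2*(2*|b*n1 - d*n0| + (a*d - b^2) + 1))) ≤ 1 :=
        min_le_left _ _
      have h0' : 0 < min 1 (n1^2/(2*(2*|b*n1 - d*n0| + (a*d - b^2) + 1))) :=
        lt_min one_pos (by positivity)
      nlinarith
    · have h2' := min_le_right (1:ℝ) (n1^2/(2*(2*|b*n1 - d*n0| + (a*d - b^2) + 1)))
      calc min 1 (n1^2/(2*(2*|b*n1 - d*n0| + (a*d - b^2) + 1)))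
            * (2*|b*n1 - d*n0| + (a*d - b^2) + 1)
          ≤ (n1^2/(2*(2*|b*n1 - d*n0| + (a*d - b^2) + 1)))
            * (2*|b*n1 - d*n0| + (a*d - b^2) + 1) :=
            mul_le_mul_of_nonneg_right h2' hc1.le
        _ = n1^2/2 := by rw [div_mul_eq_mul_div, mul_div_mul_right _ _ hc1.ne']
  have hΔ : 0 ≤ (b*ε + n1)^2 - 2*d*((1/2)*a*ε^2 + ε*n0) := by
    have habs : ε * (-(|b*n1 - d*n0|)) ≤ ε * (b*n1 - d*n0) :=
      mul_le_mul_of_nonneg_left (neg_abs_le _) hε.le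
    have h2 : ε^2*(a*d - b^2) ≤ ε*(a*d - b^2) :=
      mul_le_mul_of_nonneg_right hε2 hdet.le
    nlinarith
  obtain ⟨s, hroot⟩ := DM_root2 d (b*ε + n1) ((1/2)*a*ε^2 + ε*n0) hd hΔ
  refine ⟨ε, s, hε, ?_⟩
  simp only [Gs] at hG ⊢
  linear_combination hG - hroot + ε*hn0 + s*hn1

lemma DM_tangency (a b d m0 m1 X Y : ℝ) (ha : 0 < a) (hd : 0 < d)
    (hdet : 0 < a*d - b^2) (hmu : ¬(m0 = 0 ∧ m1 = 0))
    (hG : Gs a b d m0 m1 X Y = 0)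
    (hmax : ∀ x y, Gs a b d m0 m1 x y = 0 → x ≤ X) :
    b*X + d*Y + m1 = 0 ∧ 0 < a*X + b*Y + m0 := by
  have hn1 : b*X + d*Y + m1 = 0 := by
    by_contra h1
    obtain ⟨ε, s, hε, hGb⟩ := DM_perturb a b d m0 m1 X Y _ _ hd hdet hG rfl rfl h1
    have := hmax (X+ε) (Y+s) hGb
    linarith
  refine ⟨hn1, ?_⟩
  rcases lt_trichotomy (a*X + b*Y + m0) 0 with h0 | h0 | h0
  · exfalso
    obtain ⟨e, he, hae⟩ : ∃ e : ℝ, 0 < e ∧ a*e = -(a*X + b*Y + m0) :=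
      ⟨-(a*X + b*Y + m0)/a, div_pos (by linarith) ha, by field_simp⟩
    have hin : 0 < Gs a b d m0 m1 (X + e) Y := by
      have heq : Gs a b d m0 m1 (X + e) Y
          = -(1/2)*(a*e)*e - e*(a*X + b*Y + m0) := by
        simp only [Gs] at hG ⊢
        linear_combination hG
      rw [heq, hae]
      nlinarith [mul_pos he (show 0 < -(a*X + b*Y + m0) by linarith)]
    have h2 := DM_lt_max a b d m0 m1 X ha hmax _ _ hin
    linarith
  · exfalso
    have hst := DM_star a b d m0 m1 X Y hG
    rw [h0, hn1] at hst
    have hq0 : a*X^2 + 2*b*X*Y + d*Y^2 = 0 := by linarith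
    have hXY : X = 0 ∧ Y = 0 := by
      by_contra hc
      have := DM_qf_pos a b d X Y ha hdet hc
      linarith
    obtain ⟨hX0, hY0⟩ := hXY
    rw [hX0, hY0] at h0 hn1
    simp at h0 hn1
    exact hmu ⟨h0, hn1⟩
  · exact h0

lemma DM_fac (a b d m0 m1 c y1 y2 : ℝ)
    (h1 : Gs a b d m0 m1 c y1 = 0) (h2 : Gs a b d m0 m1 c y2 = 0)
    (hne : y1 ≠ y2) :
    ∀ y, Gs a b d m0 m1 c y = -(d/2)*((y - y1)*(y - y2)) := by
  have h3 : (y1 - y2) * (d*(y1+y2)/2 + b*c + m1) = 0 := by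
    simp only [Gs] at h1 h2
    linear_combination h2 - h1
  have key : d*(y1+y2)/2 + b*c + m1 = 0 :=
    (mul_eq_zero.mp h3).resolve_left (sub_ne_zero.mpr hne)
  intro y
  simp only [Gs] at h1 ⊢
  linear_combination h1 + (y1 - y)*key

lemma DM_lower_root (a b d m0 m1 c y1 y2 : ℝ) (hd : 0 < d)
    (h1 : Gs a b d m0 m1 c y1 = 0) (h2 : Gs a b d m0 m1 c y2 = 0)
    (hne : y1 ≠ y2) (hneg : b*c + d*y1 + m1 < 0) : y1 < y2 := by
  have h3 : (y1 - y2) * (d*(y1+y2)/2 + b*c + m1) = 0 := by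
    simp only [Gs] at h1 h2
    linear_combination h2 - h1
  have key : d*(y1+y2)/2 + b*c + m1 = 0 :=
    (mul_eq_zero.mp h3).resolve_left (sub_ne_zero.mpr hne)
  nlinarith [key, hneg, hd]

lemma DM_combo (a b d m0 m1 x1 y1 x2 y2 l : ℝ) (ha : 0 < a) (hdet : 0 < a*d - b^2)
    (hu : 0 < Gs a b d m0 m1 x1 y1) (hv : 0 ≤ Gs a b d m0 m1 x2 y2)
    (hl0 : 0 ≤ l) (hl1 : l < 1) :
    0 < Gs a b d m0 m1 (x1 + l*(x2-x1)) (y1 + l*(y2-y1)) := by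
  have hqf := DM_qf_nonneg a b d (x2-x1) (y2-y1) ha hdet
  have hid : Gs a b d m0 m1 (x1 + l*(x2-x1)) (y1 + l*(y2-y1))
      = (1-l)*Gs a b d m0 m1 x1 y1 + l*Gs a b d m0 m1 x2 y2
        + (1/2)*(l*(1-l))*(a*(x2-x1)^2 + 2*b*(x2-x1)*(y2-y1) + d*(y2-y1)^2) := by
    simp only [Gs]; ring
  rw [hid]
  have t1 : 0 < (1-l)*Gs a b d m0 m1 x1 y1 := mul_pos (by linarith) hu
  have t2 : 0 ≤ l*Gs a b d m0 m1 x2 y2 := mul_nonneg hl0 hv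
  have t3 : 0 ≤ (1/2)*(l*(1-l))*(a*(x2-x1)^2 + 2*b*(x2-x1)*(y2-y1) + d*(y2-y1)^2) := by
    apply mul_nonneg (by nlinarith) hqf
  linarith

lemma DM_mid (a b d m0 m1 x1 y1 x2 y2 : ℝ)
    (h1 : Gs a b d m0 m1 x1 y1 = 0) (h2 : Gs a b d m0 m1 x2 y2 = 0) :
    Gs a b d m0 m1 ((x1+x2)/2) ((y1+y2)/2)
      = (1/8)*(a*(x2-x1)^2 + 2*b*(x2-x1)*(y2-y1) + d*(y2-y1)^2) := by
  simp only [Gs] at h1 h2 ⊢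
  linear_combination (1/2)*h1 + (1/2)*h2

lemma DM_pick (D0 D1 e0 e1 : ℝ) (h0 : 0 < D0) (h1 : 0 < D1)
    (he0 : 0 ≤ e0) (he1 : 0 ≤ e1) :
    ∃ l : ℝ, 0 < l ∧ l < 1 ∧ l*e0 < D0 ∧ l*e1 < D1 := by
  refine ⟨min (1/2) (min (D0/(e0+1)) (D1/(e1+1))), ?_, ?_, ?_, ?_⟩
  · exact lt_min (by norm_num) (lt_min (by positivity) (by positivity))
  · have := min_le_left (1/2 : ℝ) (min (D0/(e0+1)) (D1/(e1+1)))
    linarith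
  · have hle : min (1/2 : ℝ) (min (D0/(e0+1)) (D1/(e1+1))) ≤ D0/(e0+1) :=
      le_trans (min_le_right _ _) (min_le_left _ _)
    have hl0 : 0 < min (1/2 : ℝ) (min (D0/(e0+1)) (D1/(e1+1))) :=
      lt_min (by norm_num) (lt_min (by positivity) (by positivity))
    have h2 : min (1/2 : ℝ) (min (D0/(e0+1)) (D1/(e1+1))) * (e0+1) ≤ D0 := by
      calc min (1/2 : ℝ) (min (D0/(e0+1)) (D1/(e1+1))) * (e0+1)
          ≤ (D0/(e0+1)) * (e0+1) := mul_le_mul_of_nonneg_right hle (by linarith)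
        _ = D0 := by field_simp
    nlinarith
  · have hle : min (1/2 : ℝ) (min (D0/(e0+1)) (D1/(e1+1))) ≤ D1/(e1+1) :=
      le_trans (min_le_right _ _) (min_le_right _ _)
    have hl0 : 0 < min (1/2 : ℝ) (min (D0/(e0+1)) (D1/(e1+1))) :=
      lt_min (by norm_num) (lt_min (by positivity) (by positivity))
    have h2 : min (1/2 : ℝ) (min (D0/(e0+1)) (D1/(e1+1))) * (e1+1) ≤ D1 := by
      calc min (1/2 : ℝ) (min (D0/(e0+1)) (D1/(e1+1))) * (e1+1)
          ≤ (D1/(e1+1)) * (e1+1) := mul_le_mul_of_nonneg_right hle (by linarith)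
        _ = D1 := by field_simp
    nlinarith

lemma DM_factX (a b d m0 m1 u0 u1 X1 Y1 x2 y2 : ℝ)
    (ha : 0 < a) (hd : 0 < d) (hdet : 0 < a*d - b^2)
    (hGu : Gs a b d m0 m1 u0 u1 = 0)
    (hG1 : Gs a b d m0 m1 X1 Y1 = 0)
    (ht1 : b*X1 + d*Y1 + m1 = 0) (hm : 0 < a*X1 + b*Y1 + m0)
    (ht2 : a*x2 + b*y2 + m0 = 0) (hs : 0 < b*x2 + d*y2 + m1)
    (hG2 : Gs a b d m0 m1 x2 y2 = 0)
    (hu0 : 0 < u0) (hx2 : u0 ≤ x2) (hD : 0 < u0*Y1 - u1*X1) :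
    b*u0 + d*u1 + m1 < 0 := by
  by_contra hn1c
  push_neg at hn1c
  have hO : Gs a b d m0 m1 0 0 = 0 := by simp [Gs]
  have hy2 : 0 < y2 := by
    have hne : ¬((0:ℝ) = x2 ∧ (0:ℝ) = y2) := by
      rintro ⟨hx0, _⟩; rw [← hx0] at hx2; linarith
    have hp := DM_pair_lt a b d m0 m1 x2 y2 0 0 ha hdet hG2 hO hne
    have ht2' : (a*x2 + b*y2 + m0)*(0 - x2) = 0 := by rw [ht2]; ring
    by_contra h'
    push_neg at h'
    have k : 0 ≤ (b*x2 + d*y2 + m1)*(0 - y2) := mul_nonneg hs.le (by linarith)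
    linarith [hp, ht2', k]
  by_cases hub : u0 = x2 ∧ u1 = y2
  · obtain ⟨e1, e2⟩ := hub
    have hn1s : b*u0 + d*u1 + m1 = b*x2 + d*y2 + m1 := by rw [e1, e2]
    have hne1 : ¬(u0 = X1 ∧ u1 = Y1) := by
      rintro ⟨f1, f2⟩
      rw [f1, f2] at hn1s
      linarith [hs, ht1]
    have hp1 := DM_pair_lt a b d m0 m1 u0 u1 X1 Y1 ha hdet hGu hG1
      (by rintro ⟨f1, f2⟩; exact hne1 ⟨f1.symm, f2.symm⟩)
    have hz2 : a*u0 + b*u1 + m0 = 0 := by rw [e1, e2]; exact ht2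
    have hz2' : (a*u0 + b*u1 + m0)*(X1 - u0) = 0 := by rw [hz2]; ring
    have hY1u1 : Y1 < u1 := by
      by_contra h'
      push_neg at h'
      have k : 0 ≤ (b*u0 + d*u1 + m1)*(Y1 - u1) :=
        mul_nonneg (by linarith [hn1s, hs]) (by linarith)
      linarith [hp1, hz2', k]
    have hp2 := DM_pair_lt a b d m0 m1 X1 Y1 u0 u1 ha hdet hG1 hGu hne1
    have ht1' : (b*X1 + d*Y1 + m1)*(u1 - Y1) = 0 := by rw [ht1]; ring
    have hu0X1 : u0 < X1 := by
      by_contra h'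
      push_neg at h'
      have k : 0 ≤ (a*X1 + b*Y1 + m0)*(u0 - X1) := mul_nonneg hm.le (by linarith)
      linarith [hp2, ht1', k]
    rw [e2] at hD
    have hY1y2 : Y1 < y2 := e2 ▸ hY1u1
    have k1 : u0*Y1 < u0*y2 := mul_lt_mul_of_pos_left hY1y2 hu0
    have k2 : u0*y2 < X1*y2 := mul_lt_mul_of_pos_right hu0X1 hy2
    linarith [hD, k1, k2]
  · have hw : u1 < y2 := by
      have hp := DM_pair_lt a b d m0 m1 x2 y2 u0 u1 ha hdet hG2 hGu hub
      have ht2' : (a*x2 + b*y2 + m0)*(u0 - x2) = 0 := by rw [ht2]; ring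
      by_contra h'
      push_neg at h'
      have k : 0 ≤ (b*x2 + d*y2 + m1)*(u1 - y2) := mul_nonneg hs.le (by linarith)
      linarith [hp, ht2', k]
    have hn0 : a*u0 + b*u1 + m0 < 0 := by
      have hp := DM_pair_lt a b d m0 m1 u0 u1 x2 y2 ha hdet hGu hG2
        (by rintro ⟨f1, f2⟩; exact hub ⟨f1.symm, f2.symm⟩)
      by_contra h'
      push_neg at h'
      have k1 : 0 ≤ (a*u0 + b*u1 + m0)*(x2 - u0) := mul_nonneg h' (by linarith)
      have k2 : 0 ≤ (b*u0 + d*u1 + m1)*(y2 - u1) := mul_nonneg hn1c (by linarith)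
      linarith [hp]
    have hstar := DM_star a b d m0 m1 u0 u1 hGu
    have hQFu : 0 < a*u0^2 + 2*b*u0*u1 + d*u1^2 :=
      DM_qf_pos a b d u0 u1 ha hdet (by rintro ⟨f1, _⟩; exact absurd f1 (ne_of_gt hu0))
    have hprod : 0 < (b*u0 + d*u1 + m1)*u1 := by
      have k3 := mul_pos hu0 (show 0 < -(a*u0 + b*u1 + m0) by linarith)
      linarith [hstar, k3, hQFu]
    have hn1' : 0 < b*u0 + d*u1 + m1 := by
      rcases hn1c.lt_or_eq with h | h
      · exact h
      · exfalso; rw [← h] at hprod; simp at hprod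
    have hu1 : 0 < u1 := by nlinarith [hprod, hn1']
    have hne1 : ¬(u0 = X1 ∧ u1 = Y1) := by
      rintro ⟨f1, f2⟩
      rw [f1, f2] at hn1'
      linarith [ht1]
    have hpp : 0 < X1 - u0 := by
      have hp := DM_pair_lt a b d m0 m1 X1 Y1 u0 u1 ha hdet hG1 hGu hne1
      have ht1' : (b*X1 + d*Y1 + m1)*(u1 - Y1) = 0 := by rw [ht1]; ring
      by_contra h'
      push_neg at h'
      have k : 0 ≤ (a*X1 + b*Y1 + m0)*(u0 - X1) := mul_nonneg hm.le (by linarith)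
      linarith [hp, ht1', k]
    have hq : 0 < Y1 - u1 := by
      by_contra h'
      push_neg at h'
      have k1 : u0*Y1 ≤ u0*u1 := mul_le_mul_of_nonneg_left (by linarith) hu0.le
      have k2 : u1*u0 < u1*X1 := mul_lt_mul_of_pos_left (by linarith [hpp]) hu1
      linarith [hD, k1, k2]
    have hE : u0*(d*(Y1-u1)^2 - a*(X1-u0)^2)
        - 2*(X1-u0)*u1*(b*(X1-u0) + d*(Y1-u1))
        - (X1-u0)*(a*u0^2 + 2*b*u0*u1 + d*u1^2) = 0 := by
      simp only [Gs] at hGu hG1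
      linear_combination (-2*(X1-u0) - 2*u0)*hGu + 2*u0*hG1
        + (2*u0*(Y1-u1) - 2*(X1-u0)*u1)*ht1
    have hQ1 : 0 < u0*(Y1-u1) - u1*(X1-u0) := by linarith [hD, sq_nonneg (0:ℝ)]
    have hQ2 : 0 < -(b*(X1-u0)) - d*(Y1-u1) := by linarith [hn1', ht1]
    have hpW : 0 < (X1-u0)*(-(b*u0) - d*u1) := by
      have hiden : (X1-u0)*(-(b*u0) - d*u1)
          = u0*(-(b*(X1-u0)) - d*(Y1-u1)) + d*(u0*(Y1-u1) - u1*(X1-u0)) := by ring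
      rw [hiden]
      have h5 := mul_pos hu0 hQ2
      have h6 := mul_pos hd hQ1
      linarith
    have hW : 0 < -(b*u0) - d*u1 := by nlinarith [hpW, hpp]
    have hid : (X1-u0)*((X1-u0)+u0)*(a*u0^2 + 2*b*u0*u1 + d*u1^2)*(-(b*(X1-u0)) - d*(Y1-u1))
        + (u0*(X1-u0)^2*(a*d - b^2) + d*(X1-u0)*(a*u0^2 + 2*b*u0*u1 + d*u1^2))
            *(u0*(Y1-u1) - u1*(X1-u0))
        + (u0*(Y1-u1) - u1*(X1-u0))*(-(b*(X1-u0)) - d*(Y1-u1))*(X1-u0)*(-(b*u0) - d*u1)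
        = 0 := by
      linear_combination (-((X1-u0)*(-(b*u0) - d*u1)))*hE
    have T1 : 0 < (X1-u0)*((X1-u0)+u0)*(a*u0^2 + 2*b*u0*u1 + d*u1^2)*(-(b*(X1-u0)) - d*(Y1-u1)) :=
      mul_pos (mul_pos (mul_pos hpp (by linarith)) hQFu) hQ2
    have T2 : 0 < (u0*(X1-u0)^2*(a*d - b^2) + d*(X1-u0)*(a*u0^2 + 2*b*u0*u1 + d*u1^2))
        *(u0*(Y1-u1) - u1*(X1-u0)) := by
      apply mul_pos _ hQ1
      have h7 : 0 < u0*(X1-u0)^2*(a*d - b^2) := by positivity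
      have h8 : 0 < d*(X1-u0)*(a*u0^2 + 2*b*u0*u1 + d*u1^2) :=
        mul_pos (mul_pos hd hpp) hQFu
      linarith
    have T3 : 0 < (u0*(Y1-u1) - u1*(X1-u0))*(-(b*(X1-u0)) - d*(Y1-u1))*(X1-u0)*(-(b*u0) - d*u1) :=
      mul_pos (mul_pos (mul_pos hQ1 hQ2) hpp) hW
    linarith

/-- explicit form of the domain `𝒟^(1)` (Lemma 3.1 of Dai–Miyazawa). -/
theorem stmt_0
    (S R : Matrix (Fin 2) (Fin 2) ℝ) (μ : V)
    (hSpd : S.PosDef) (hSsym : S.IsSymm) (hμ : μ ≠ 0)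
    (hP : condP R) (hS : condS μ R)
    (θmax1 θmax2 tθ1r : V)
    -- θ^(1,max) is the point of ∂Γ maximizing the first coordinate
    (hmax1 : gam S μ θmax1 = 0 ∧ ∀ θ, gam S μ θ = 0 → θ 0 ≤ θmax1 0)
    -- θ^(2,max) is the point of ∂Γ maximizing the second coordinate
    (hmax2 : gam S μ θmax2 = 0 ∧ ∀ θ, gam S μ θ = 0 → θ 1 ≤ θmax2 1)
    -- θ̃^(1,r) is the symmetric point of θ^(1,r) on ∂Γ
    (htθ1r : (θray1 S μ R = θmax1 ∧ tθ1r = θmax1) ∨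
      (θray1 S μ R ≠ θmax1 ∧ gam S μ tθ1r = 0 ∧
        tθ1r 0 = θray1 S μ R 0 ∧ tθ1r 1 ≠ θray1 S μ R 1))
    (θΓ1 : V) (hθΓ1 : θΓ1 = if gam2 R θmax1 ≤ 0 then θmax1 else θray1 S μ R) :
    -- case (i)
    ((0 < gam2 R θmax1 → θray1 S μ R 0 ≤ θmax2 0 →
        Dset S μ 0 (θΓ1 0) = {θ | ltc θ tθ1r}) ∧
    -- case (ii)
     (0 < gam2 R θmax1 → θmax2 0 < θray1 S μ R 0 →
        Dset S μ 0 (θΓ1 0) = Gmax S μ ∩ {θ | θ 0 < tθ1r 0}) ∧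
    -- case (iii)
     (gam2 R θmax1 ≤ 0 → Dset S μ 0 (θΓ1 0) = Gmax S μ)) := by
  have hsym : S 1 0 = S 0 1 := hSsym.apply 0 1
  -- scalar data
  set a := S 0 0 with ha'
  set b := S 0 1 with hb'
  set d := S 1 1 with hd'
  set m0 := μ 0 with hm0'
  set m1 := μ 1 with hm1'
  have hgam : ∀ θ : V, gam S μ θ = Gs a b d m0 m1 (θ 0) (θ 1) := by
    intro θ
    simp only [gam, Gs, dotProduct, Matrix.mulVec, Fin.sum_univ_two]
    rw [hsym]
    ring
  have ha : 0 < a := by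
    have hne : (![1,0] : Fin 2 → ℝ) ≠ 0 := by
      intro h; have := congrFun h 0; simp at this
    have := hSpd.dotProduct_mulVec_pos hne
    simpa [dotProduct, Matrix.mulVec, Fin.sum_univ_two] using this
  have hd : 0 < d := by
    have hne : (![0,1] : Fin 2 → ℝ) ≠ 0 := by
      intro h; have := congrFun h 1; simp at this
    have := hSpd.dotProduct_mulVec_pos hne
    simpa [dotProduct, Matrix.mulVec, Fin.sum_univ_two] using this
  have hdet : 0 < a*d - b^2 := by
    have h := hSpd.det_pos
    rw [Matrix.det_fin_two] at h
    rw [hsym] at h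
    nlinarith [h]
  have hmu : ¬(m0 = 0 ∧ m1 = 0) := by
    rintro ⟨h0, h1⟩
    apply hμ
    funext i
    fin_cases i
    · exact h0
    · exact h1
  -- boundary and maximality in scalar form
  have hG1 : Gs a b d m0 m1 (θmax1 0) (θmax1 1) = 0 := by
    rw [← hgam]; exact hmax1.1
  have hG2 : Gs a b d m0 m1 (θmax2 0) (θmax2 1) = 0 := by
    rw [← hgam]; exact hmax2.1
  have hmax1' : ∀ x y, Gs a b d m0 m1 x y = 0 → x ≤ θmax1 0 := by
    intro x y h
    have h2 := hmax1.2 ![x,y] (by rw [hgam]; simpa using h)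
    simpa using h2
  have hmax2' : ∀ x y, Gs a b d m0 m1 x y = 0 → y ≤ θmax2 1 := by
    intro x y h
    have h2 := hmax2.2 ![x,y] (by rw [hgam]; simpa using h)
    simpa using h2
  have hswap : ∀ x y, Gs d b a m1 m0 y x = Gs a b d m0 m1 x y := by
    intro x y; simp only [Gs]; ring
  have htan1 := DM_tangency a b d m0 m1 (θmax1 0) (θmax1 1) ha hd hdet hmu hG1 hmax1'
  have ht1 : b*(θmax1 0) + d*(θmax1 1) + m1 = 0 := htan1.1
  have hm : 0 < a*(θmax1 0) + b*(θmax1 1) + m0 := htan1.2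
  have hmax2'' : ∀ x y, Gs d b a m1 m0 x y = 0 → x ≤ θmax2 1 := by
    intro x y h
    exact hmax2' y x (by rw [← hswap]; exact h)
  have htan2 := DM_tangency d b a m1 m0 (θmax2 1) (θmax2 0) hd ha
    (by nlinarith [hdet]) (by rintro ⟨h1, h0⟩; exact hmu ⟨h0, h1⟩)
    (by rw [hswap]; exact hG2) hmax2''
  have ht2 : a*(θmax2 0) + b*(θmax2 1) + m0 = 0 := by linarith [htan2.1]
  have hs : 0 < b*(θmax2 0) + d*(θmax2 1) + m1 := by linarith [htan2.2]
  have F1 := DM_lt_max a b d m0 m1 (θmax1 0) ha hmax1'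
  have F2 : ∀ x y, 0 < Gs a b d m0 m1 x y → y < θmax2 1 := by
    intro x y h
    exact DM_lt_max d b a m1 m0 (θmax2 1) hd hmax2'' y x (by rw [hswap]; exact h)
  -- θray1 in scalar form
  have hu0f : θray1 S μ R 0 = (-2*(m0*(R 1 1) - m1*(R 0 1)) /
      (a*(R 1 1)^2 + 2*b*(R 1 1)*(-(R 0 1)) + d*(-(R 0 1))^2)) * (R 1 1) := by
    simp only [θray1, pvec1, Pi.smul_apply, smul_eq_mul, dotProduct, Matrix.mulVec,
      Fin.sum_univ_two, Matrix.cons_val_zero, Matrix.cons_val_one, Matrix.head_cons]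
    rw [hsym]
    rw [ha', hb', hd', hm0', hm1']
    ring_nf
  have hu1f : θray1 S μ R 1 = (-2*(m0*(R 1 1) - m1*(R 0 1)) /
      (a*(R 1 1)^2 + 2*b*(R 1 1)*(-(R 0 1)) + d*(-(R 0 1))^2)) * (-(R 0 1)) := by
    simp only [θray1, pvec1, Pi.smul_apply, smul_eq_mul, dotProduct, Matrix.mulVec,
      Fin.sum_univ_two, Matrix.cons_val_zero, Matrix.cons_val_one, Matrix.head_cons]
    rw [hsym]
    rw [ha', hb', hd', hm0', hm1']
    ring_nf
  have hQP : 0 < a*(R 1 1)^2 + 2*b*(R 1 1)*(-(R 0 1)) + d*(-(R 0 1))^2 :=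
    DM_qf_pos a b d (R 1 1) (-(R 0 1)) ha hdet
      (by rintro ⟨h1, _⟩; exact absurd h1 (ne_of_gt hP.2.1))
  have hQPne : a*(R 1 1)^2 + 2*b*(R 1 1)*(-(R 0 1)) + d*(-(R 0 1))^2 ≠ 0 := ne_of_gt hQP
  have hMv : m0*(R 1 1) - m1*(R 0 1) < 0 := by
    have := hS.1
    rw [← hm0', ← hm1'] at *
    nlinarith [hS.1]
  have htt : 0 < -2*(m0*(R 1 1) - m1*(R 0 1)) /
      (a*(R 1 1)^2 + 2*b*(R 1 1)*(-(R 0 1)) + d*(-(R 0 1))^2) :=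
    div_pos (by linarith) hQP
  have hu0pos : 0 < θray1 S μ R 0 := by
    rw [hu0f]; exact mul_pos htt hP.2.1
  have hinv : (a*(R 1 1)^2 + 2*b*(R 1 1)*(-(R 0 1)) + d*(-(R 0 1))^2)
      * (a*(R 1 1)^2 + 2*b*(R 1 1)*(-(R 0 1)) + d*(-(R 0 1))^2)⁻¹ = 1 :=
    mul_inv_cancel₀ hQPne
  have hGu : Gs a b d m0 m1 (θray1 S μ R 0) (θray1 S μ R 1) = 0 := by
    rw [hu0f, hu1f]
    simp only [Gs]
    linear_combination (-2*(m0*(R 1 1) - m1*(R 0 1))^2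
      * (a*(R 1 1)^2 + 2*b*(R 1 1)*(-(R 0 1)) + d*(-(R 0 1))^2)⁻¹) * hinv
  refine ⟨?_, ?_, ?_⟩
  · -- case (i)
    intro h2 hcase
    have hΓ0 : θΓ1 = θray1 S μ R := by rw [hθΓ1, if_neg (not_le.mpr h2)]
    have hΓ00 : θΓ1 0 = θray1 S μ R 0 := by rw [hΓ0]
    have hg2u : gam2 R (θray1 S μ R) = 0 := by
      simp only [gam2]
      rw [hu0f, hu1f]
      ring
    have hray_ne : θray1 S μ R ≠ θmax1 := by
      intro h
      rw [h] at hg2u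
      linarith
    rcases htθ1r with ⟨heq, _⟩ | ⟨_, hbG, hb0, hb1⟩
    · exact absurd heq hray_ne
    have hT : Gs a b d m0 m1 (tθ1r 0) (tθ1r 1) = 0 := by
      rw [← hgam]; exact hbG
    have hTu : Gs a b d m0 m1 (θray1 S μ R 0) (tθ1r 1) = 0 := by
      rw [← hb0]; exact hT
    have hg2m : 0 < R 0 1 * θmax1 0 + R 1 1 * θmax1 1 := h2
    have hDpos : 0 < (θray1 S μ R 0)*(θmax1 1) - (θray1 S μ R 1)*(θmax1 0) := by
      have hiden : (θray1 S μ R 0)*(θmax1 1) - (θray1 S μ R 1)*(θmax1 0)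
          = (-2*(m0*(R 1 1) - m1*(R 0 1)) /
              (a*(R 1 1)^2 + 2*b*(R 1 1)*(-(R 0 1)) + d*(-(R 0 1))^2))
            * (R 0 1 * θmax1 0 + R 1 1 * θmax1 1) := by
        rw [hu0f, hu1f]; ring
      rw [hiden]
      exact mul_pos htt hg2m
    have hfact : b*(θray1 S μ R 0) + d*(θray1 S μ R 1) + m1 < 0 :=
      DM_factX a b d m0 m1 (θray1 S μ R 0) (θray1 S μ R 1) (θmax1 0) (θmax1 1)
        (θmax2 0) (θmax2 1) ha hd hdet hGu hG1 ht1 hm ht2 hs hG2 hu0pos hcase hDpos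
    have hlow : θray1 S μ R 1 < tθ1r 1 :=
      DM_lower_root a b d m0 m1 (θray1 S μ R 0) (θray1 S μ R 1) (tθ1r 1) hd hGu hTu
        (Ne.symm hb1) hfact
    have hfac2 := DM_fac a b d m0 m1 (θray1 S μ R 0) (θray1 S μ R 1) (tθ1r 1) hGu hTu
      (Ne.symm hb1)
    ext θ
    simp only [Dset, Gam, mem_setOf_eq]
    constructor
    · rintro ⟨θ', hG', hl, hlt0⟩
      rw [hΓ00] at hlt0
      have hG's : 0 < Gs a b d m0 m1 (θ' 0) (θ' 1) := by rw [← hgam]; exact hG'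
      have key : θ' 1 < tθ1r 1 := by
        rcases lt_or_eq_of_le hcase with hlt2 | heq2
        · -- strict: build interior point on the chord
          have hden2 : 0 < θmax2 0 - θ' 0 := by linarith
          have hlam0 : 0 ≤ (θray1 S μ R 0 - θ' 0)/(θmax2 0 - θ' 0) :=
            div_nonneg (by linarith) hden2.le
          have hlam1 : (θray1 S μ R 0 - θ' 0)/(θmax2 0 - θ' 0) < 1 :=
            (div_lt_one hden2).mpr (by linarith)
          have hz := DM_combo a b d m0 m1 (θ' 0) (θ' 1) (θmax2 0) (θmax2 1)
            ((θray1 S μ R 0 - θ' 0)/(θmax2 0 - θ' 0)) ha hdet hG's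
            (le_of_eq hG2.symm) hlam0 hlam1
          have hz0 : θ' 0 + ((θray1 S μ R 0 - θ' 0)/(θmax2 0 - θ' 0))*(θmax2 0 - θ' 0)
              = θray1 S μ R 0 := by
            field_simp
            ring
          rw [hz0] at hz
          rw [hfac2 _] at hz
          have hX : (θ' 1 + ((θray1 S μ R 0 - θ' 0)/(θmax2 0 - θ' 0))*(θmax2 1 - θ' 1)
                - θray1 S μ R 1)
              * (θ' 1 + ((θray1 S μ R 0 - θ' 0)/(θmax2 0 - θ' 0))*(θmax2 1 - θ' 1)
                - tθ1r 1) < 0 := by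
            by_contra hP'
            push_neg at hP'
            linarith [hz, mul_nonneg hd.le hP']
          have hz1ge : θ' 1 ≤ θ' 1 + ((θray1 S μ R 0 - θ' 0)/(θmax2 0 - θ' 0))*(θmax2 1 - θ' 1) := by
            have hF2 := F2 (θ' 0) (θ' 1) hG's
            have := mul_nonneg hlam0 (show (0:ℝ) ≤ θmax2 1 - θ' 1 by linarith)
            linarith
          by_contra h'
          push_neg at h'
          have k : 0 ≤ (θ' 1 + ((θray1 S μ R 0 - θ' 0)/(θmax2 0 - θ' 0))*(θmax2 1 - θ' 1)
                - θray1 S μ R 1)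
              * (θ' 1 + ((θray1 S μ R 0 - θ' 0)/(θmax2 0 - θ' 0))*(θmax2 1 - θ' 1)
                - tθ1r 1) :=
            mul_nonneg (by linarith [hlow, hz1ge]) (by linarith [hz1ge])
          linarith [hX, k]
        · -- tangent: the chord goes through θ^(2,max)
          have hG2' : Gs a b d m0 m1 (θray1 S μ R 0) (θmax2 1) = 0 := by
            rw [heq2]; exact hG2
          have hzero := hfac2 (θmax2 1)
          rw [hG2'] at hzero
          have hfactor : (θmax2 1 - θray1 S μ R 1)*(θmax2 1 - tθ1r 1) = 0 := by
            have hdP : d * ((θmax2 1 - θray1 S μ R 1)*(θmax2 1 - tθ1r 1)) = 0 := by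
              linear_combination (2 : ℝ)*hzero
            exact (mul_eq_zero.mp hdP).resolve_left (ne_of_gt hd)
          have hTle : tθ1r 1 ≤ θmax2 1 := hmax2' _ _ hTu
          have hune : θmax2 1 ≠ θray1 S μ R 1 := by
            intro h
            rw [h] at hTle
            linarith
          have h1eq : θmax2 1 = tθ1r 1 := by
            rcases mul_eq_zero.mp hfactor with h | h
            · exact absurd (by linarith [sub_eq_zero.mp h] : θmax2 1 = θray1 S μ R 1) hune
            · linarith [sub_eq_zero.mp h]
          have := F2 (θ' 0) (θ' 1) hG's
          linarith
      intro i
      fin_cases i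
      · show θ 0 < tθ1r 0
        rw [hb0]
        linarith [hl 0, hlt0]
      · show θ 1 < tθ1r 1
        linarith [hl 1, key]
    · intro hltT
      have hGw : 0 < Gs a b d m0 m1 ((θray1 S μ R 0)/2) ((θray1 S μ R 1)/2) := by
        have hO : Gs a b d m0 m1 0 0 = 0 := by simp [Gs]
        have hmid := DM_mid a b d m0 m1 0 0 (θray1 S μ R 0) (θray1 S μ R 1) hO hGu
        rw [show ((0:ℝ)+θray1 S μ R 0)/2 = (θray1 S μ R 0)/2 from by ring,
            show ((0:ℝ)+θray1 S μ R 1)/2 = (θray1 S μ R 1)/2 from by ring] at hmid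
        rw [hmid]
        have hqf : 0 < a*(θray1 S μ R 0 - 0)^2 + 2*b*(θray1 S μ R 0 - 0)*(θray1 S μ R 1 - 0)
            + d*(θray1 S μ R 1 - 0)^2 :=
          DM_qf_pos a b d _ _ ha hdet
            (by rintro ⟨f1, _⟩; rw [sub_zero] at f1; exact absurd f1 (ne_of_gt hu0pos))
        linarith
      obtain ⟨l, hl0, hl1, hcl0, hcl1⟩ := DM_pick (tθ1r 0 - θ 0) (tθ1r 1 - θ 1)
        |((θray1 S μ R 0)/2) - tθ1r 0| |((θray1 S μ R 1)/2) - tθ1r 1|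
        (by have := hltT 0; linarith) (by have := hltT 1; linarith)
        (abs_nonneg _) (abs_nonneg _)
      have hmem := DM_combo a b d m0 m1 ((θray1 S μ R 0)/2) ((θray1 S μ R 1)/2)
        (tθ1r 0) (tθ1r 1) (1-l) ha hdet hGw (le_of_eq hT.symm) (by linarith) (by linarith)
      rw [show (θray1 S μ R 0)/2 + (1-l)*(tθ1r 0 - (θray1 S μ R 0)/2)
            = tθ1r 0 + l*((θray1 S μ R 0)/2 - tθ1r 0) from by ring,
          show (θray1 S μ R 1)/2 + (1-l)*(tθ1r 1 - (θray1 S μ R 1)/2)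
            = tθ1r 1 + l*((θray1 S μ R 1)/2 - tθ1r 1) from by ring] at hmem
      refine ⟨![tθ1r 0 + l*((θray1 S μ R 0)/2 - tθ1r 0),
               tθ1r 1 + l*((θray1 S μ R 1)/2 - tθ1r 1)], ?_, ?_, ?_⟩
      · rw [hgam]
        simpa using hmem
      · intro i
        fin_cases i
        · show θ 0 < tθ1r 0 + l*((θray1 S μ R 0)/2 - tθ1r 0)
          have habs : -(l*|((θray1 S μ R 0)/2) - tθ1r 0|)
              ≤ l*(((θray1 S μ R 0)/2) - tθ1r 0) := by
            have := mul_le_mul_of_nonneg_left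
              (neg_abs_le (((θray1 S μ R 0)/2) - tθ1r 0)) hl0.le
            linarith [this]
          linarith
        · show θ 1 < tθ1r 1 + l*((θray1 S μ R 1)/2 - tθ1r 1)
          have habs : -(l*|((θray1 S μ R 1)/2) - tθ1r 1|)
              ≤ l*(((θray1 S μ R 1)/2) - tθ1r 1) := by
            have := mul_le_mul_of_nonneg_left
              (neg_abs_le (((θray1 S μ R 1)/2) - tθ1r 1)) hl0.le
            linarith [this]
          linarith
      · show (![tθ1r 0 + l*((θray1 S μ R 0)/2 - tθ1r 0),
               tθ1r 1 + l*((θray1 S μ R 1)/2 - tθ1r 1)] : V) 0 < θΓ1 0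
        rw [hΓ00]
        simp only [Matrix.cons_val_zero]
        rw [hb0]
        linarith [mul_pos hl0 hu0pos]
  · -- case (ii)
    intro h2 hcase
    have hΓ0 : θΓ1 = θray1 S μ R := by rw [hθΓ1, if_neg (not_le.mpr h2)]
    have hΓ00 : θΓ1 0 = θray1 S μ R 0 := by rw [hΓ0]
    have hg2u : gam2 R (θray1 S μ R) = 0 := by
      simp only [gam2]
      rw [hu0f, hu1f]
      ring
    have hray_ne : θray1 S μ R ≠ θmax1 := by
      intro h
      rw [h] at hg2u
      linarith
    rcases htθ1r with ⟨heq, _⟩ | ⟨_, hbG, hb0, hb1⟩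
    · exact absurd heq hray_ne
    ext θ
    simp only [Dset, Gam, Gmax, mem_setOf_eq, mem_inter_iff]
    constructor
    · rintro ⟨θ', hG', hl, hlt0⟩
      rw [hΓ00] at hlt0
      exact ⟨⟨θ', hG', hl⟩, by rw [hb0]; linarith [hl 0]⟩
    · rintro ⟨⟨θ'', hG'', hl⟩, hθ0⟩
      rw [hb0] at hθ0
      have hG''s : 0 < Gs a b d m0 m1 (θ'' 0) (θ'' 1) := by rw [← hgam]; exact hG''
      by_cases hc : θ'' 0 < θray1 S μ R 0
      · exact ⟨θ'', hG'', hl, by rw [hΓ00]; exact hc⟩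
      · push_neg at hc
        obtain ⟨x0, hx0a, hx0b⟩ : ∃ x0, max (θ 0) (θmax2 0) < x0 ∧ x0 < θray1 S μ R 0 := by
          have hmaxlt : max (θ 0) (θmax2 0) < θray1 S μ R 0 := max_lt hθ0 hcase
          exact ⟨(max (θ 0) (θmax2 0) + θray1 S μ R 0)/2, by linarith, by linarith⟩
        have hx2x0 : θmax2 0 < x0 := lt_of_le_of_lt (le_max_right _ _) hx0a
        have hθx0 : θ 0 < x0 := lt_of_le_of_lt (le_max_left _ _) hx0a
        have hden : 0 < θ'' 0 - θmax2 0 := by linarith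
        have hlam0 : 0 ≤ (θ'' 0 - x0)/(θ'' 0 - θmax2 0) :=
          div_nonneg (by linarith) hden.le
        have hlam1 : (θ'' 0 - x0)/(θ'' 0 - θmax2 0) < 1 :=
          (div_lt_one hden).mpr (by linarith)
        have hz := DM_combo a b d m0 m1 (θ'' 0) (θ'' 1) (θmax2 0) (θmax2 1)
          ((θ'' 0 - x0)/(θ'' 0 - θmax2 0)) ha hdet hG''s (le_of_eq hG2.symm) hlam0 hlam1
        have hz0 : θ'' 0 + ((θ'' 0 - x0)/(θ'' 0 - θmax2 0))*(θmax2 0 - θ'' 0) = x0 := by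
          field_simp
          ring
        rw [hz0] at hz
        have hz1ge : θ'' 1 ≤ θ'' 1 + ((θ'' 0 - x0)/(θ'' 0 - θmax2 0))*(θmax2 1 - θ'' 1) := by
          have hF2 := F2 (θ'' 0) (θ'' 1) hG''s
          have := mul_nonneg hlam0 (show (0:ℝ) ≤ θmax2 1 - θ'' 1 by linarith)
          linarith
        refine ⟨![x0, θ'' 1 + ((θ'' 0 - x0)/(θ'' 0 - θmax2 0))*(θmax2 1 - θ'' 1)], ?_, ?_, ?_⟩
        · rw [hgam]
          simpa using hz
        · intro i
          fin_cases i
          · simpa using hθx0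
          · show θ 1 < θ'' 1 + ((θ'' 0 - x0)/(θ'' 0 - θmax2 0))*(θmax2 1 - θ'' 1)
            linarith [hl 1, hz1ge]
        · show (![x0, _] : V) 0 < θΓ1 0
          rw [hΓ00]
          simpa using hx0b
  · -- case (iii)
    intro h3
    have hΓ0 : θΓ1 = θmax1 := by rw [hθΓ1, if_pos h3]
    have hΓ00 : θΓ1 0 = θmax1 0 := by rw [hΓ0]
    ext θ
    simp only [Dset, Gam, Gmax, mem_setOf_eq]
    constructor
    · rintro ⟨θ', hG', hl, _⟩
      exact ⟨θ', hG', hl⟩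
    · rintro ⟨θ', hG', hl⟩
      refine ⟨θ', hG', hl, ?_⟩
      rw [hΓ00]
      exact F1 (θ' 0) (θ' 1) (by rw [← hgam]; exact hG')
end
end

section
/- Assume conditions (P) and (S), and let v ∈ ℝ² with v₁ ≥ 0 and v₂ ≥ 0. Write n = n^Γ(θ̃^(1,r)). Then: (i) if γ₂(θ^(1,max)) > 0 and θ̃^(1,r)₁ ≤ θ^(2,max)₁, then sup{⟨v, θ⟩ : θ ∈ 𝒟^(1)} = ⟨v, θ̃^(1,r)⟩; (ii) if γ₂(θ^(1,max)) > 0, θ̃^(1,r)₁ > θ^(2,max)₁ and v is below or on n (that is, n₁v₂ − n₂v₁ ≤ 0), then sup{⟨v, θ⟩ : θ ∈ 𝒟^(1)} = ⟨v, θ̃^(1,r)⟩; (iii) if γ₂(θ^(1,max)) > 0, θ̃^(1,r)₁ > θ^(2,max)₁ and v is above n (that is, n₁v₂ − n₂v₁ > 0), then sup{⟨v, θ⟩ : θ ∈ 𝒟^(1)} = sup{⟨v, θ⟩ : θ ∈ Γ}; (iv) if γ₂(θ^(1,max)) ≤ 0, then sup{⟨v, θ⟩ : θ ∈ 𝒟^(1)}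 = sup{⟨v, θ⟩ : θ ∈ Γ}. -/
open Matrix Set

noncomputable section

/-! ### Auxiliary lemmas -/

lemma sqpos {x : ℝ} (h : x ≠ 0) : 0 < x ^ 2 := by
  rcases lt_or_gt_of_ne h with h | h <;> nlinarith

/-- the quadratic form associated to the ellipse, with sign flipped:
`Γ = {q < 0}`, `∂Γ = {q = 0}`. -/
def qf (a b d m0 m1 x y : ℝ) : ℝ := a/2*x^2 + b*x*y + d/2*y^2 + m0*x + m1*y

/-- moving right from an interior point of the ellipse, one hits the boundary. -/
lemma qroot (a b d m0 m1 x y : ℝ) (ha : 0 < a) (hneg : qf a b d m0 m1 x y < 0) :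
    ∃ u : ℝ, 0 < u ∧ qf a b d m0 m1 (x + u) y = 0 := by
  set n0 := a*x + b*y + m0 with hn0
  set D := n0^2 - 2*a*(qf a b d m0 m1 x y) with hD
  have hDpos : n0^2 < D := by rw [hD]; nlinarith
  have hDnn : 0 ≤ D := le_trans (sq_nonneg _) hDpos.le
  set s := Real.sqrt D with hs
  have hs2 : s^2 = D := Real.sq_sqrt hDnn
  have habs : |n0| < s := by
    have h1 : Real.sqrt (n0^2) < Real.sqrt D := Real.sqrt_lt_sqrt (sq_nonneg _) hDpos
    rwa [Real.sqrt_sq_eq_abs] at h1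
  have hn0lt : n0 < s := lt_of_le_of_lt (le_abs_self _) habs
  refine ⟨(s - n0)/a, div_pos (by linarith) ha, ?_⟩
  have hau : a * ((s - n0)/a) = s - n0 := by field_simp
  have hexp : 2*a*(qf a b d m0 m1 (x + (s - n0)/a) y) =
      2*a*(qf a b d m0 m1 x y) + 2*(a*((s - n0)/a))*n0 + (a*((s - n0)/a))^2 := by
    simp only [qf, hn0]; ring
  rw [hau] at hexp
  have hz : 2*a*(qf a b d m0 m1 (x + (s - n0)/a) y) = 0 := by
    rw [hexp]; linear_combination hs2 + hD
  have h2a : (2*a : ℝ) ≠ 0 := by positivity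
  exact (mul_eq_zero.mp hz).resolve_left h2a

lemma supval (A : Set ℝ) (c : ℝ) (hub : ∀ x ∈ A, x ≤ c)
    (happ : ∀ δ : ℝ, 0 < δ → ∃ x ∈ A, c - δ ≤ x) : sSup A = c := by
  obtain ⟨x0, hx0, _⟩ := happ 1 one_pos
  have hne : A.Nonempty := ⟨x0, hx0⟩
  have hbdd : BddAbove A := ⟨c, hub⟩
  refine le_antisymm (csSup_le hne hub) ?_
  refine le_of_forall_pos_le_add fun δ hδ => ?_
  obtain ⟨x, hx, hge⟩ := happ δ hδ
  have := le_csSup hbdd hx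
  linarith

lemma supeq (A B : Set ℝ) (hB : B.Nonempty)
    (hAB : ∀ x ∈ A, ∃ y ∈ B, x ≤ y)
    (hBA : ∀ y ∈ B, ∀ δ : ℝ, 0 < δ → ∃ x ∈ A, y - δ ≤ x) : sSup A = sSup B := by
  obtain ⟨y0, hy0⟩ := hB
  have hB' : B.Nonempty := ⟨y0, hy0⟩
  obtain ⟨x0, hx0, _⟩ := hBA y0 hy0 1 one_pos
  have hA : A.Nonempty := ⟨x0, hx0⟩
  have hub : upperBounds A = upperBounds B := by
    ext r
    constructor
    · intro hr y hy
      refine le_of_forall_pos_le_add fun δ hδ => ?_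
      obtain ⟨x, hx, hge⟩ := hBA y hy δ hδ
      have := hr hx
      linarith
    · intro hr x hx
      obtain ⟨y, hy, hle⟩ := hAB x hx
      exact hle.trans (hr hy)
  by_cases hbdd : BddAbove B
  · have hbddA : BddAbove A := by rw [BddAbove, hub]; exact hbdd
    refine le_antisymm ?_ ?_
    · refine csSup_le hA fun x hx => ?_
      have h1 : sSup B ∈ upperBounds B := (isLUB_csSup hB' hbdd).1
      rw [← hub] at h1
      exact h1 hx
    · refine csSup_le hB' fun y hy => ?_
      have h1 : sSup A ∈ upperBounds A := (isLUB_csSup hA hbddA).1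
      rw [hub] at h1
      exact h1 hy
  · have hbddA : ¬ BddAbove A := by rw [BddAbove, hub]; exact hbdd
    rw [Real.sSup_of_not_bddAbove hbdd, Real.sSup_of_not_bddAbove hbddA]

set_option maxHeartbeats 2000000 in
/-- geometric evaluation of `sup{⟨v,θ⟩ : θ ∈ 𝒟^(1)}` (Lemma 3.2). -/
theorem stmt_1
    (S R : Matrix (Fin 2) (Fin 2) ℝ) (μ : V)
    (hSpd : S.PosDef) (hSsym : S.IsSymm) (hμ : μ ≠ 0)
    (hP : condP R) (hS : condS μ R)
    (θmax1 θmax2 tθ1r : V)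
    (hmax1 : gam S μ θmax1 = 0 ∧ ∀ θ, gam S μ θ = 0 → θ 0 ≤ θmax1 0)
    (hmax2 : gam S μ θmax2 = 0 ∧ ∀ θ, gam S μ θ = 0 → θ 1 ≤ θmax2 1)
    (htθ1r : (θray1 S μ R = θmax1 ∧ tθ1r = θmax1) ∨
      (θray1 S μ R ≠ θmax1 ∧ gam S μ tθ1r = 0 ∧
        tθ1r 0 = θray1 S μ R 0 ∧ tθ1r 1 ≠ θray1 S μ R 1))
    (θΓ1 : V) (hθΓ1 : θΓ1 = if gam2 R θmax1 ≤ 0 then θmax1 else θray1 S μ R)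
    (v : V) (hv1 : 0 ≤ v 0) (hv2 : 0 ≤ v 1)
    -- n = n^Γ(θ̃^(1,r)) = Σ θ̃^(1,r) + μ
    (n : V) (hn : n = S.mulVec tθ1r + μ) :
    -- case (i)
    ((0 < gam2 R θmax1 → tθ1r 0 ≤ θmax2 0 →
        sSup ((fun θ => v ⬝ᵥ θ) '' Dset S μ 0 (θΓ1 0)) = v ⬝ᵥ tθ1r) ∧
    -- case (ii): v is below or on n
     (0 < gam2 R θmax1 → θmax2 0 < tθ1r 0 → n 0 * v 1 - n 1 * v 0 ≤ 0 →
        sSup ((fun θ => v ⬝ᵥ θ) '' Dset S μ 0 (θΓ1 0)) = v ⬝ᵥ tθ1r) ∧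
    -- case (iii): v is above n
     (0 < gam2 R θmax1 → θmax2 0 < tθ1r 0 → 0 < n 0 * v 1 - n 1 * v 0 →
        sSup ((fun θ => v ⬝ᵥ θ) '' Dset S μ 0 (θΓ1 0)) =
          sSup ((fun θ => v ⬝ᵥ θ) '' Gam S μ)) ∧
    -- case (iv)
     (gam2 R θmax1 ≤ 0 →
        sSup ((fun θ => v ⬝ᵥ θ) '' Dset S μ 0 (θΓ1 0)) =
          sSup ((fun θ => v ⬝ᵥ θ) '' Gam S μ))) := by
  obtain ⟨hP1, hP2, hP3⟩ := hP
  obtain ⟨hS1, hS2⟩ := hS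
  obtain ⟨a, ha_def⟩ : ∃ x, S 0 0 = x := ⟨_, rfl⟩
  obtain ⟨b, hb_def⟩ : ∃ x, S 0 1 = x := ⟨_, rfl⟩
  obtain ⟨d, hd_def⟩ : ∃ x, S 1 1 = x := ⟨_, rfl⟩
  obtain ⟨m0, hm0_def⟩ : ∃ x, μ 0 = x := ⟨_, rfl⟩
  obtain ⟨m1, hm1_def⟩ : ∃ x, μ 1 = x := ⟨_, rfl⟩
  obtain ⟨xm, hxm_def⟩ : ∃ x, θmax1 0 = x := ⟨_, rfl⟩
  obtain ⟨ym, hym_def⟩ : ∃ x, θmax1 1 = x := ⟨_, rfl⟩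
  obtain ⟨x2, hx2_def⟩ : ∃ x, θmax2 0 = x := ⟨_, rfl⟩
  obtain ⟨y2, hy2_def⟩ : ∃ x, θmax2 1 = x := ⟨_, rfl⟩
  obtain ⟨xt, hxt_def⟩ : ∃ x, tθ1r 0 = x := ⟨_, rfl⟩
  obtain ⟨yt, hyt_def⟩ : ∃ x, tθ1r 1 = x := ⟨_, rfl⟩
  have hbq : S 1 0 = b := by rw [← hb_def]; exact hSsym.apply 1 0 |>.symm ▸ rfl
  have hgamq : ∀ θ : V, gam S μ θ = - qf a b d m0 m1 (θ 0) (θ 1) := by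
    intro θ
    simp only [gam, qf, dotProduct, Matrix.mulVec, Fin.sum_univ_two, ha_def, hb_def, hd_def,
      hm0_def, hm1_def, hbq]
    ring
  have hgam_xy : ∀ x y : ℝ, gam S μ ![x, y] = - qf a b d m0 m1 x y := by
    intro x y; rw [hgamq]; simp
  have hdot : ∀ θ : V, v ⬝ᵥ θ = v 0 * θ 0 + v 1 * θ 1 := by
    intro θ; simp [dotProduct, Fin.sum_univ_two]
  have hquadpos : ∀ u w : ℝ, ¬(u = 0 ∧ w = 0) → 0 < a*u^2 + 2*b*u*w + d*w^2 := by
    intro u w hne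
    have h2 := hSpd.dotProduct_mulVec_pos (x := ![u, w]) (by
      intro hx
      exact hne ⟨by simpa using congrFun hx 0, by simpa using congrFun hx 1⟩)
    simp [dotProduct, Matrix.mulVec, Fin.sum_univ_two, ha_def, hb_def, hd_def, hbq] at h2
    nlinarith [h2]
  have ha : 0 < a := by have := hquadpos 1 0 (by norm_num); nlinarith
  have hd : 0 < d := by have := hquadpos 0 1 (by norm_num); nlinarith
  have hquad : ∀ u w : ℝ, 0 ≤ a*u^2 + 2*b*u*w + d*w^2 := by
    intro u w
    by_cases h : u = 0 ∧ w = 0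
    · obtain ⟨h1, h2⟩ := h; rw [h1, h2]; norm_num
    · exact (hquadpos u w h).le
  -- nonemptiness of Γ
  have hμ' : ¬(m0 = 0 ∧ m1 = 0) := by
    rintro ⟨h0, h1⟩
    apply hμ
    funext i
    fin_cases i
    · simpa [← hm0_def] using h0
    · simpa [← hm1_def] using h1
  have hEq : 0 < a*m0^2 + 2*b*m0*m1 + d*m1^2 := hquadpos m0 m1 hμ'
  have hm2pos : 0 < m0^2 + m1^2 := by
    rcases not_and_or.mp hμ' with h | h <;> nlinarith [sqpos h, sq_nonneg m0, sq_nonneg m1]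
  set ss := (m0^2 + m1^2)/(a*m0^2 + 2*b*m0*m1 + d*m1^2) with hss_def
  have hΓpt : qf a b d m0 m1 (-(ss*m0)) (-(ss*m1)) < 0 := by
    have hid : qf a b d m0 m1 (-(ss*m0)) (-(ss*m1))
        = -(m0^2+m1^2)^2/(2*(a*m0^2 + 2*b*m0*m1 + d*m1^2)) := by
      rw [hss_def]; simp only [qf]; field_simp; ring
    rw [hid]
    exact div_neg_of_neg_of_pos (by nlinarith) (by linarith)
  have hΓmem : (![-(ss*m0), -(ss*m1)] : V) ∈ Gam S μ := by
    show 0 < gam S μ _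
    rw [hgam_xy]; linarith
  -- scalar facts about the extremal points
  have hq_m : qf a b d m0 m1 xm ym = 0 := by
    have h := hmax1.1; rw [hgamq, hxm_def, hym_def] at h; linarith
  have hq_2 : qf a b d m0 m1 x2 y2 = 0 := by
    have h := hmax2.1; rw [hgamq, hx2_def, hy2_def] at h; linarith
  have hmaxx : ∀ x y : ℝ, qf a b d m0 m1 x y = 0 → x ≤ xm := by
    intro x y hxy
    have h := hmax1.2 ![x, y] (by rw [hgam_xy]; linarith)
    simpa [hxm_def] using h
  have hmaxy : ∀ x y : ℝ, qf a b d m0 m1 x y = 0 → y ≤ y2 := by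
    intro x y hxy
    have h := hmax2.2 ![x, y] (by rw [hgam_xy]; linarith)
    simpa [hy2_def] using h
  have hM : ∀ x y : ℝ, qf a b d m0 m1 x y < 0 → x < xm := by
    intro x y hxy
    obtain ⟨u, hu, hq0⟩ := qroot a b d m0 m1 x y ha hxy
    have := hmaxx (x+u) y hq0; linarith
  have hMy : ∀ x y : ℝ, qf a b d m0 m1 x y < 0 → y < y2 := by
    intro x y hxy
    have hswap : qf d b a m1 m0 y x < 0 := by
      have : qf d b a m1 m0 y x = qf a b d m0 m1 x y := by simp only [qf]; ring
      rw [this]; exact hxy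
    obtain ⟨u, hu, hq0⟩ := qroot d b a m1 m0 y x hd hswap
    have hq0' : qf a b d m0 m1 x (y+u) = 0 := by
      have : qf a b d m0 m1 x (y+u) = qf d b a m1 m0 (y+u) x := by simp only [qf]; ring
      rw [this]; exact hq0
    have := hmaxy x (y+u) hq0'; linarith
  -- tangency at the extremal points
  have hT1 : b*xm + d*ym + m1 = 0 := by
    by_contra hne
    have hint : qf a b d m0 m1 xm (ym - (b*xm + d*ym + m1)/d) < 0 := by
      have hid : qf a b d m0 m1 xm (ym - (b*xm + d*ym + m1)/d)
          = qf a b d m0 m1 xm ym - (b*xm + d*ym + m1)^2/(2*d) := by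
        simp only [qf]; field_simp; ring
      rw [hid, hq_m]
      have h2 : 0 < (b*xm + d*ym + m1)^2 := sqpos hne
      have : 0 < (b*xm + d*ym + m1)^2/(2*d) := by positivity
      linarith
    exact absurd (hM _ _ hint) (lt_irrefl xm)
  have hT2 : a*x2 + b*y2 + m0 = 0 := by
    by_contra hne
    have hint : qf a b d m0 m1 (x2 - (a*x2 + b*y2 + m0)/a) y2 < 0 := by
      have hid : qf a b d m0 m1 (x2 - (a*x2 + b*y2 + m0)/a) y2
          = qf a b d m0 m1 x2 y2 - (a*x2 + b*y2 + m0)^2/(2*a) := by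
        simp only [qf]; field_simp; ring
      rw [hid, hq_2]
      have h2 : 0 < (a*x2 + b*y2 + m0)^2 := sqpos hne
      have : 0 < (a*x2 + b*y2 + m0)^2/(2*a) := by positivity
      linarith
    exact absurd (hMy _ _ hint) (lt_irrefl y2)
  have hn12 : 0 < b*x2 + d*y2 + m1 := by
    rcases lt_trichotomy (b*x2 + d*y2 + m1) 0 with h | h | h
    · exfalso
      have hint : qf a b d m0 m1 x2 (y2 - (b*x2 + d*y2 + m1)/d) < 0 := by
        have hid : qf a b d m0 m1 x2 (y2 - (b*x2 + d*y2 + m1)/d)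
            = qf a b d m0 m1 x2 y2 - (b*x2 + d*y2 + m1)^2/(2*d) := by
          simp only [qf]; field_simp; ring
        rw [hid, hq_2]
        have h2 : 0 < (b*x2 + d*y2 + m1)^2 := sqpos (ne_of_lt h)
        have : 0 < (b*x2 + d*y2 + m1)^2/(2*d) := by positivity
        linarith
      have hlt := hMy _ _ hint
      have : (b*x2 + d*y2 + m1)/d < 0 := div_neg_of_neg_of_pos h hd
      linarith
    · exfalso
      have hσ : a*x2^2 + 2*b*x2*y2 + d*y2^2 = 0 := by
        simp only [qf] at hq_2
        linear_combination 2*x2*hT2 + 2*y2*h - 2*hq_2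
      have h00 : x2 = 0 ∧ y2 = 0 := by
        by_contra hc
        have := hquadpos x2 y2 hc
        linarith
      exact hμ' ⟨by rw [h00.1, h00.2] at hT2; linarith, by rw [h00.1, h00.2] at h; linarith⟩
    · exact h
  -- interior points have q < 0
  have hmemq : ∀ θ' : V, θ' ∈ Gam S μ → qf a b d m0 m1 (θ' 0) (θ' 1) < 0 := by
    intro θ' h
    have h2 : 0 < gam S μ θ' := h
    rw [hgamq] at h2; linarith
  have hvt : v ⬝ᵥ tθ1r = v 0 * xt + v 1 * yt := by rw [hdot, hxt_def, hyt_def]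
  -- elements of Dset are dominated by elements of Gam
  have hdom : ∀ (θ θ'' : V), ltc θ θ'' → v ⬝ᵥ θ ≤ v ⬝ᵥ θ'' := by
    intro θ θ'' hlt
    rw [hdot, hdot]
    nlinarith [mul_nonneg hv1 (sub_nonneg.mpr (hlt 0).le), mul_nonneg hv2 (sub_nonneg.mpr (hlt 1).le)]
  -- approximating an interior point from within Dset
  have hDmem : ∀ (c : ℝ) (θ' : V), 0 < gam S μ θ' → θ' 0 < c → ∀ δ : ℝ, 0 < δ →
      ∃ z ∈ (fun θ => v ⬝ᵥ θ) '' Dset S μ 0 c, v ⬝ᵥ θ' - δ ≤ z := by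
    intro c θ' hθ'Γ hθ'0 δ hδ
    have hvsum : 0 < v 0 + v 1 + 1 := by linarith
    set ε := δ/(v 0 + v 1 + 1) with hε_def
    have hε : 0 < ε := div_pos hδ hvsum
    refine ⟨v ⬝ᵥ (fun i => θ' i - ε), ⟨fun i => θ' i - ε,
      ⟨θ', hθ'Γ, fun i => by show θ' i - ε < θ' i; linarith, hθ'0⟩, rfl⟩, ?_⟩
    rw [hdot, hdot]
    have hεv : ε*(v 0 + v 1 + 1) = δ := by rw [hε_def]; field_simp
    show v 0 * θ' 0 + v 1 * θ' 1 - δ ≤ v 0 * (θ' 0 - ε) + v 1 * (θ' 1 - ε)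
    nlinarith [mul_nonneg hv1 hε.le, mul_nonneg hv2 hε.le]
  -- components of n
  have hn0c : n 0 = a*xt + b*yt + m0 := by
    rw [hn]
    show (S.mulVec tθ1r) 0 + μ 0 = _
    simp only [Matrix.mulVec, dotProduct, Fin.sum_univ_two, ha_def, hb_def, hm0_def,
      hxt_def, hyt_def]
  have hn1c : n 1 = b*xt + d*yt + m1 := by
    rw [hn]
    show (S.mulVec tθ1r) 1 + μ 1 = _
    simp only [Matrix.mulVec, dotProduct, Fin.sum_univ_two, hbq, hd_def, hm1_def,
      hxt_def, hyt_def]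
  -- the shared development for cases (i)-(iii)
  have hshared : 0 < gam2 R θmax1 →
      (qf a b d m0 m1 xt yt = 0 ∧ 0 < b*xt + d*yt + m1 ∧ θΓ1 0 = xt) := by
    intro hγ2
    have hγ2' : 0 < R 0 1 * xm + R 1 1 * ym := by
      have h := hγ2; simp only [gam2, hxm_def, hym_def] at h; linarith only [h]
    obtain ⟨PP, hPP_def⟩ : ∃ x, x = a*(R 1 1)^2 - 2*b*(R 1 1)*(R 0 1) + d*(R 0 1)^2 := ⟨_, rfl⟩
    have hPP : 0 < PP := by
      have h := hquadpos (R 1 1) (-(R 0 1)) (by rintro ⟨h1, -⟩; exact absurd h1 (ne_of_gt hP2))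
      rw [hPP_def]; linarith only [h]
    obtain ⟨mm, hmm_def⟩ : ∃ x, x = m0*(R 1 1) - m1*(R 0 1) := ⟨_, rfl⟩
    have hmm : mm < 0 := by
      have h := hS1; rw [hm0_def, hm1_def] at h; rw [hmm_def]; linarith only [h]
    have hPPne : PP ≠ 0 := ne_of_gt hPP
    obtain ⟨tt, htt_def⟩ : ∃ x, x = -2*mm/PP := ⟨_, rfl⟩
    have htt : 0 < tt := by rw [htt_def]; exact div_pos (by linarith) hPP
    have htP : tt * PP = -2*mm := by rw [htt_def]; exact div_mul_cancel₀ _ hPPne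
    have hray0 : θray1 S μ R 0 = tt * R 1 1 := by
      rw [htt_def, hmm_def, hPP_def]
      simp only [θray1, pvec1, Pi.smul_apply, dotProduct, Matrix.mulVec, Fin.sum_univ_two,
        Matrix.cons_val_zero, Matrix.cons_val_one, Matrix.head_cons, smul_eq_mul,
        ha_def, hb_def, hd_def, hm0_def, hm1_def, hbq]
      ring_nf
    have hray1c : θray1 S μ R 1 = -(tt * R 0 1) := by
      rw [htt_def, hmm_def, hPP_def]
      simp only [θray1, pvec1, Pi.smul_apply, dotProduct, Matrix.mulVec, Fin.sum_univ_two,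
        Matrix.cons_val_zero, Matrix.cons_val_one, Matrix.head_cons, smul_eq_mul,
        ha_def, hb_def, hd_def, hm0_def, hm1_def, hbq]
      ring_nf
    have hqray : qf a b d m0 m1 (tt*(R 1 1)) (-(tt*(R 0 1))) = 0 := by
      have hid : qf a b d m0 m1 (tt*(R 1 1)) (-(tt*(R 0 1)))
          = (tt*(tt*PP) + 2*(tt*mm))/2 := by
        simp only [qf, hPP_def, hmm_def]; ring
      rw [hid]; linear_combination (tt/2)*htP
    -- the first alternative of htθ1r is impossible
    have hray_ne : θray1 S μ R ≠ θmax1 := by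
      intro heq
      have h0 : R 0 1 * xm + R 1 1 * ym = 0 := by
        rw [← hxm_def, ← hym_def, ← heq, hray0, hray1c]; ring
      linarith only [h0, hγ2']
    obtain ⟨-, hqt0, hxteq, hytne⟩ := htθ1r.resolve_left (fun h => hray_ne h.1)
    have hqt : qf a b d m0 m1 xt yt = 0 := by
      rw [hgamq, hxt_def, hyt_def] at hqt0; linarith only [hqt0]
    have hxt : xt = tt * R 1 1 := by rw [← hxt_def, hxteq, hray0]
    obtain ⟨y1, hy1_def⟩ : ∃ x, x = -(tt * R 0 1) := ⟨_, rfl⟩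
    have hyne : yt ≠ y1 := by rw [← hyt_def, hy1_def, ← hray1c]; exact hytne
    have hqray' : qf a b d m0 m1 xt y1 = 0 := by rw [hxt, hy1_def]; exact hqray
    -- the two intersection points of the vertical line with the ellipse
    have hfac : (yt - y1) * (d/2*(yt + y1) + b*xt + m1) = 0 := by
      have h1 := hqt; have h2 := hqray'
      simp only [qf] at h1 h2
      linear_combination h1 - h2
    have hsum : (b*xt + d*yt + m1) + (b*xt + d*y1 + m1) = 0 := by
      have h2 := (mul_eq_zero.mp hfac).resolve_left (sub_ne_zero_of_ne hyne)
      linarith only [h2]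
    -- KEY FACT: the ray point is the lower intersection
    have hnr1ne : b*xt + d*y1 + m1 ≠ 0 := by
      intro h0
      have hid : qf a b d m0 m1 xt yt = qf a b d m0 m1 xt y1
          + (b*xt + d*y1 + m1)*(yt - y1) + d/2*(yt - y1)^2 := by
        simp only [qf]; ring
      rw [hqt, hqray', h0] at hid
      have h3 : 0 < (yt - y1)^2 := sqpos (sub_ne_zero_of_ne hyne)
      have h4 : 0 < d * (yt - y1)^2 := mul_pos hd h3
      linarith only [hid, h4]
    have hnr1 : b*xt + d*y1 + m1 < 0 := by
      rcases lt_or_gt_of_ne hnr1ne with h | hpos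
      · exact h
      exfalso
      have hxtle : xt ≤ xm := hmaxx xt y1 hqray'
      have hxtlt : xt < xm := by
        rcases lt_or_eq_of_le hxtle with h | heq
        · exact h
        exfalso
        have hqm' : qf a b d m0 m1 xt ym = 0 := by rw [heq]; exact hq_m
        have hT1' : b*xt + d*ym + m1 = 0 := by rw [heq]; exact hT1
        have hyt_eq : yt = ym := by
          have hid : qf a b d m0 m1 xt yt = qf a b d m0 m1 xt ym
              + (b*xt + d*ym + m1)*(yt - ym) + d/2*(yt - ym)^2 := by
            simp only [qf]; ring
          rw [hqt, hqm', hT1'] at hid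
          have h5 : d/2*(yt - ym)^2 = 0 := by linarith only [hid]
          have h6 : (yt - ym)^2 = 0 := by
            rcases mul_eq_zero.mp h5 with h | h
            · exfalso; linarith only [h, hd]
            · exact h
          have h7 : yt - ym = 0 := by
            exact pow_eq_zero_iff (two_ne_zero) |>.mp h6
          linarith only [h7]
        have hy1_eq : y1 = ym := by
          have hid : qf a b d m0 m1 xt y1 = qf a b d m0 m1 xt ym
              + (b*xt + d*ym + m1)*(y1 - ym) + d/2*(y1 - ym)^2 := by
            simp only [qf]; ring
          rw [hqray', hqm', hT1'] at hid
          have h5 : d/2*(y1 - ym)^2 = 0 := by linarith only [hid]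
          have h6 : (y1 - ym)^2 = 0 := by
            rcases mul_eq_zero.mp h5 with h | h
            · exfalso; linarith only [h, hd]
            · exact h
          have h7 : y1 - ym = 0 := by
            exact pow_eq_zero_iff (two_ne_zero) |>.mp h6
          linarith only [h7]
        exact hyne (by rw [hyt_eq, hy1_eq])
      have hsupp : (a*xt + b*y1 + m0)*(xm - xt) + (b*xt + d*y1 + m1)*(ym - y1) ≤ 0 := by
        have hid : qf a b d m0 m1 xm ym = qf a b d m0 m1 xt y1
            + (a*xt + b*y1 + m0)*(xm - xt) + (b*xt + d*y1 + m1)*(ym - y1)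
            + (a*(xm - xt)^2 + 2*b*(xm - xt)*(ym - y1) + d*(ym - y1)^2)/2 := by
          simp only [qf]; ring
        rw [hq_m, hqray'] at hid
        linarith only [hid, hquad (xm - xt) (ym - y1)]
      have hcross : (a*xt + b*y1 + m0)*(R 1 1) - (b*xt + d*y1 + m1)*(R 0 1) = -mm := by
        have hid : (a*xt + b*y1 + m0)*(R 1 1) - (b*xt + d*y1 + m1)*(R 0 1)
            = tt*PP + mm := by
          rw [hxt, hy1_def]; simp only [hPP_def, hmm_def]; ring
        rw [hid, htP]; ring
      have hline : R 0 1 * xt + R 1 1 * y1 = 0 := by rw [hxt, hy1_def]; ring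
      have key1 : (R 1 1)*((a*xt + b*y1 + m0)*(xm - xt) + (b*xt + d*y1 + m1)*(ym - y1)) ≤ 0 :=
        mul_nonpos_iff.mpr (Or.inl ⟨hP2.le, hsupp⟩)
      have key2 : mm*xm - mm*xt < 0 := by
        have := mul_neg_of_pos_of_neg (show (0:ℝ) < xm - xt by linarith) hmm
        linarith only [this]
      have key3 : (R 0 1)*(b*xt + d*y1 + m1)*xm - (R 0 1)*(b*xt + d*y1 + m1)*xt
          - (R 1 1)*(a*xt + b*y1 + m0)*xm + (R 1 1)*(a*xt + b*y1 + m0)*xt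
          = mm*xm - mm*xt := by
        linear_combination (xt - xm)*hcross
      have key4 : (R 1 1)*((b*xt + d*y1 + m1)*y1) = -((R 0 1)*((b*xt + d*y1 + m1)*xt)) := by
        linear_combination (b*xt + d*y1 + m1)*hline
      have key5 : 0 < (b*xt + d*y1 + m1)*(R 0 1 * xm + R 1 1 * ym) := mul_pos hpos hγ2'
      linarith only [key1, key2, key3, key4, key5]
    have hnt1 : 0 < b*xt + d*yt + m1 := by linarith only [hsum, hnr1]
    have hc : θΓ1 0 = xt := by
      rw [hθΓ1, if_neg (not_le.mpr hγ2), ← hxteq, hxt_def]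
    exact ⟨hqt, hnt1, hc⟩
  -- approaching the tilde point from inside the region {x < xt}
  have hclos : qf a b d m0 m1 xt yt = 0 → 0 < b*xt + d*yt + m1 → ∀ δ : ℝ, 0 < δ →
      ∃ θ' : V, 0 < gam S μ θ' ∧ θ' 0 < xt ∧ v ⬝ᵥ tθ1r - δ < v ⬝ᵥ θ' := by
    intro hqt hnt1 δ hδ
    obtain ⟨nt0, hnt0_def⟩ : ∃ x, x = a*xt + b*yt + m0 := ⟨_, rfl⟩
    obtain ⟨nt1, hnt1_def⟩ : ∃ x, x = b*xt + d*yt + m1 := ⟨_, rfl⟩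
    have hnt1pos : 0 < nt1 := by rw [hnt1_def]; exact hnt1
    have hnt1ne : nt1 ≠ 0 := ne_of_gt hnt1pos
    obtain ⟨w1, hw1_def⟩ : ∃ x, x = nt0/nt1 - 1 := ⟨_, rfl⟩
    obtain ⟨σw, hσw_def⟩ : ∃ x, x = a - 2*b*w1 + d*w1^2 := ⟨_, rfl⟩
    have hσw : 0 ≤ σw := by
      have h := hquad (-1) w1
      rw [hσw_def]; linarith only [h]
    have hσ1 : (σw + 1) ≠ 0 := ne_of_gt (show (0:ℝ) < σw + 1 by linarith only [hσw])
    obtain ⟨K, hK_def⟩ : ∃ x, x = |(-(v 0)) + v 1 * w1| + 1 := ⟨_, rfl⟩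
    have hK : 0 < K := by
      rw [hK_def]; positivity
    obtain ⟨sε, hs_def⟩ : ∃ x, x = (min (δ/K) (nt1/(σw+1)))/2 := ⟨_, rfl⟩
    have hspos : 0 < sε := by
      rw [hs_def]
      have h1 : 0 < δ/K := div_pos hδ hK
      have h2 : 0 < nt1/(σw+1) := div_pos hnt1pos (by linarith only [hσw])
      have h3 := lt_min h1 h2
      linarith only [h3]
    have hw1id : -nt0 + nt1*w1 = -nt1 := by
      rw [hw1_def]
      field_simp
      ring
    have hsle2 : sε ≤ nt1/(σw+1)/2 := by
      rw [hs_def]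
      have h3 := min_le_right (δ/K) (nt1/(σw+1)); linarith only [h3]
    have hbnd : sε*σw < nt1 := by
      have hc1 : nt1/(σw+1)/2*(σw+1) = nt1/2 := by
        field_simp
      have hc2 : sε*(σw+1) ≤ nt1/(σw+1)/2*(σw+1) :=
        mul_le_mul_of_nonneg_right hsle2 (by linarith only [hσw])
      rw [hc1] at hc2
      linarith only [hc2, hspos, hnt1pos]
    refine ⟨![xt - sε, yt + sε*w1], ?_, ?_, ?_⟩
    · rw [hgam_xy]
      have hid : qf a b d m0 m1 (xt - sε) (yt + sε*w1)
          = qf a b d m0 m1 xt yt + sε*(-nt0 + nt1*w1) + sε^2*σw/2 := by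
        rw [hnt0_def, hnt1_def, hσw_def]; simp only [qf]; ring
      rw [hqt, hw1id] at hid
      have h8 : sε*(sε*σw) < sε*nt1 := mul_lt_mul_of_pos_left hbnd hspos
      have h9 : 0 < sε*nt1 := mul_pos hspos hnt1pos
      have h10 : qf a b d m0 m1 (xt - sε) (yt + sε*w1) < 0 := by
        rw [hid]; linarith only [h8, h9]
      linarith only [h10]
    · simp only [Matrix.cons_val_zero]
      linarith only [hspos]
    · rw [hdot, hdot, hxt_def, hyt_def]
      simp only [Matrix.cons_val_zero, Matrix.cons_val_one, Matrix.head_cons]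
      have habs : -(|(-(v 0)) + v 1 * w1|) ≤ (-(v 0)) + v 1 * w1 := neg_abs_le _
      have h1 : sε * (-(|(-(v 0)) + v 1 * w1|)) ≤ sε * ((-(v 0)) + v 1 * w1) :=
        mul_le_mul_of_nonneg_left habs hspos.le
      have hsle1 : sε ≤ (δ/K)/2 := by
        rw [hs_def]
        have h3 := min_le_left (δ/K) (nt1/(σw+1)); linarith only [h3]
      have hsK : sε*K ≤ δ/2 := by
        have hc2 : sε*K ≤ (δ/K)/2*K := mul_le_mul_of_nonneg_right hsle1 hK.le
        have hc1 : (δ/K)/2*K = δ/2 := by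
          field_simp
        rw [hc1] at hc2; exact hc2
      rw [hK_def] at hsK
      linarith only [h1, hsK, hδ, hspos]
  -- upper bound, case (i) geometry
  have hboundi : qf a b d m0 m1 xt yt = 0 → 0 < b*xt + d*yt + m1 → a*xt + b*yt + m0 ≤ 0 →
      ∀ x y : ℝ, qf a b d m0 m1 x y < 0 → x < xt →
      v 0 * (x - xt) + v 1 * (y - yt) ≤ 0 := by
    intro hqt hnt1 hnt0 x y hq hx
    have hid : qf a b d m0 m1 x y = qf a b d m0 m1 xt yt
        + (a*xt + b*yt + m0)*(x - xt) + (b*xt + d*yt + m1)*(y - yt)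
        + (a*(x - xt)^2 + 2*b*(x - xt)*(y - yt) + d*(y - yt)^2)/2 := by
      simp only [qf]; ring
    rw [hqt] at hid
    have hsupp : (a*xt + b*yt + m0)*(x - xt) + (b*xt + d*yt + m1)*(y - yt) < 0 := by
      linarith only [hid, hq, hquad (x - xt) (y - yt)]
    have hy : y - yt < 0 := by
      by_contra hcon
      push_neg at hcon
      have h1 : 0 ≤ (b*xt + d*yt + m1)*(y - yt) := mul_nonneg hnt1.le (by linarith only [hcon])
      have h2 : 0 ≤ (-(a*xt + b*yt + m0))*(xt - x) :=
        mul_nonneg (by linarith only [hnt0]) (by linarith only [hx])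
      linarith only [hsupp, h1, h2]
    have h3 : 0 ≤ v 0 * (xt - x) := mul_nonneg hv1 (by linarith only [hx])
    have h4 : 0 ≤ v 1 * (yt - y) := mul_nonneg hv2 (by linarith only [hy])
    linarith only [h3, h4]
  -- upper bound, case (ii) geometry
  have hboundii : qf a b d m0 m1 xt yt = 0 → 0 < b*xt + d*yt + m1 →
      (a*xt + b*yt + m0) * v 1 - (b*xt + d*yt + m1) * v 0 ≤ 0 →
      ∀ x y : ℝ, qf a b d m0 m1 x y < 0 → x < xt →
      v 0 * (x - xt) + v 1 * (y - yt) ≤ 0 := by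
    intro hqt hnt1 hcr x y hq hx
    have hid : qf a b d m0 m1 x y = qf a b d m0 m1 xt yt
        + (a*xt + b*yt + m0)*(x - xt) + (b*xt + d*yt + m1)*(y - yt)
        + (a*(x - xt)^2 + 2*b*(x - xt)*(y - yt) + d*(y - yt)^2)/2 := by
      simp only [qf]; ring
    rw [hqt] at hid
    have hsupp : (a*xt + b*yt + m0)*(x - xt) + (b*xt + d*yt + m1)*(y - yt) < 0 := by
      linarith only [hid, hq, hquad (x - xt) (y - yt)]
    by_contra hcon
    push_neg at hcon
    have h1 : 0 ≤ v 1 * (-((a*xt + b*yt + m0)*(x - xt) + (b*xt + d*yt + m1)*(y - yt))) :=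
      mul_nonneg hv2 (by linarith only [hsupp])
    have h2 : 0 ≤ (xt - x) * ((b*xt + d*yt + m1)*(v 0) - (a*xt + b*yt + m0)*(v 1)) :=
      mul_nonneg (by linarith only [hx]) (by linarith only [hcr])
    have h3 : 0 < (b*xt + d*yt + m1) * (v 0 * (x - xt) + v 1 * (y - yt)) :=
      mul_pos hnt1 hcon
    linarith only [h1, h2, h3]
  -- upper bound, case (iii) geometry
  have hboundiii : qf a b d m0 m1 xt yt = 0 → 0 < b*xt + d*yt + m1 →
      0 < (a*xt + b*yt + m0) * v 1 - (b*xt + d*yt + m1) * v 0 →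
      ∀ x y : ℝ, qf a b d m0 m1 x y < 0 → xt ≤ x →
      v 0 * (x - xt) + v 1 * (y - yt) ≤ 0 := by
    intro hqt hnt1 hcr x y hq hx
    have hid : qf a b d m0 m1 x y = qf a b d m0 m1 xt yt
        + (a*xt + b*yt + m0)*(x - xt) + (b*xt + d*yt + m1)*(y - yt)
        + (a*(x - xt)^2 + 2*b*(x - xt)*(y - yt) + d*(y - yt)^2)/2 := by
      simp only [qf]; ring
    rw [hqt] at hid
    have hsupp : (a*xt + b*yt + m0)*(x - xt) + (b*xt + d*yt + m1)*(y - yt) < 0 := by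
      linarith only [hid, hq, hquad (x - xt) (y - yt)]
    by_contra hcon
    push_neg at hcon
    have h1 : 0 ≤ v 1 * (-((a*xt + b*yt + m0)*(x - xt) + (b*xt + d*yt + m1)*(y - yt))) :=
      mul_nonneg hv2 (by linarith only [hsupp])
    have h2 : 0 ≤ (x - xt) * ((a*xt + b*yt + m0)*(v 1) - (b*xt + d*yt + m1)*(v 0)) :=
      mul_nonneg (by linarith only [hx]) (by linarith only [hcr])
    have h3 : 0 < (b*xt + d*yt + m1) * (v 0 * (x - xt) + v 1 * (y - yt)) :=
      mul_pos hnt1 hcon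
    linarith only [h1, h2, h3]
  -- outward normal at the tilde point has nonpositive first component in case (i)
  have hnt0le : qf a b d m0 m1 xt yt = 0 → 0 < b*xt + d*yt + m1 → xt ≤ x2 →
      a*xt + b*yt + m0 ≤ 0 := by
    intro hqt hnt1 hxle
    rcases lt_or_eq_of_le hxle with hlt | heq
    · have hyty2 : yt ≤ y2 := by
        have hid : qf a b d m0 m1 xt yt = qf a b d m0 m1 x2 y2
            + (a*x2 + b*y2 + m0)*(xt - x2) + (b*x2 + d*y2 + m1)*(yt - y2)
            + (a*(xt - x2)^2 + 2*b*(xt - x2)*(yt - y2) + d*(yt - y2)^2)/2 := by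
          simp only [qf]; ring
        rw [hqt, hq_2, hT2] at hid
        by_contra hcon
        push_neg at hcon
        have h1 : 0 < (b*x2 + d*y2 + m1)*(yt - y2) := mul_pos hn12 (by linarith only [hcon])
        linarith only [hid, h1, hquad (xt - x2) (yt - y2)]
      have hsupp2 : (a*xt + b*yt + m0)*(x2 - xt) + (b*xt + d*yt + m1)*(y2 - yt) ≤ 0 := by
        have hid : qf a b d m0 m1 x2 y2 = qf a b d m0 m1 xt yt
            + (a*xt + b*yt + m0)*(x2 - xt) + (b*xt + d*yt + m1)*(y2 - yt)
            + (a*(x2 - xt)^2 + 2*b*(x2 - xt)*(y2 - yt) + d*(y2 - yt)^2)/2 := by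
          simp only [qf]; ring
        rw [hqt, hq_2] at hid
        linarith only [hid, hquad (x2 - xt) (y2 - yt)]
      by_contra hcon
      push_neg at hcon
      have h1 : 0 < (a*xt + b*yt + m0)*(x2 - xt) := mul_pos hcon (by linarith only [hlt])
      have h2 : 0 ≤ (b*xt + d*yt + m1)*(y2 - yt) := mul_nonneg hnt1.le (by linarith only [hyty2])
      linarith only [hsupp2, h1, h2]
    · have hq2' : qf a b d m0 m1 xt y2 = 0 := by rw [heq]; exact hq_2
      have hyeq : y2 = yt := by
        by_contra hne
        have hfac2 : (y2 - yt) * (d/2*(y2 + yt) + b*xt + m1) = 0 := by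
          have h1 := hq2'; have h2 := hqt
          simp only [qf] at h1 h2
          linear_combination h1 - h2
        have h2 := (mul_eq_zero.mp hfac2).resolve_left (sub_ne_zero_of_ne hne)
        have hn12' : 0 < b*xt + d*y2 + m1 := by rw [heq]; exact hn12
        linarith only [h2, hn12', hnt1]
      have h9 : a*xt + b*yt + m0 = 0 := by rw [heq, ← hyeq]; exact hT2
      linarith only [h9]
  -- nonemptiness and domination facts for the images
  have hGamNE : ((fun θ => v ⬝ᵥ θ) '' Gam S μ).Nonempty :=
    ⟨_, Set.mem_image_of_mem _ hΓmem⟩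
  have himg_ub : ∀ c : ℝ, ∀ z ∈ (fun θ => v ⬝ᵥ θ) '' Dset S μ 0 c,
      ∃ w ∈ (fun θ => v ⬝ᵥ θ) '' Gam S μ, z ≤ w := by
    rintro c z ⟨θ, ⟨θ'', hθ''Γ, hlt, -⟩, rfl⟩
    exact ⟨v ⬝ᵥ θ'', Set.mem_image_of_mem _ hθ''Γ, hdom θ θ'' hlt⟩
  refine ⟨?_, ?_, ?_, ?_⟩
  · -- case (i)
    intro hγ2 hxle
    obtain ⟨hqt, hnt1, hc⟩ := hshared hγ2
    have hxle' : xt ≤ x2 := by rw [← hxt_def, ← hx2_def]; exact hxle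
    have hnt0 := hnt0le hqt hnt1 hxle'
    rw [hc]
    apply supval
    · rintro z ⟨θ, ⟨θ'', hθ''Γ, hlt, hθc⟩, rfl⟩
      have hq'' := hmemq θ'' hθ''Γ
      have h2 := hboundi hqt hnt1 hnt0 (θ'' 0) (θ'' 1) hq'' hθc
      calc v ⬝ᵥ θ ≤ v ⬝ᵥ θ'' := hdom θ θ'' hlt
        _ ≤ v ⬝ᵥ tθ1r := by rw [hdot θ'', hvt]; linarith only [h2]
    · intro δ hδ
      obtain ⟨θ', hθ'Γ, hθ'0, hval⟩ := hclos hqt hnt1 (δ/2) (by linarith only [hδ])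
      obtain ⟨z, hz, hzval⟩ := hDmem xt θ' hθ'Γ hθ'0 (δ/2) (by linarith only [hδ])
      exact ⟨z, hz, by linarith only [hval, hzval]⟩
  · -- case (ii)
    intro hγ2 hgt hcr
    obtain ⟨hqt, hnt1, hc⟩ := hshared hγ2
    rw [hn0c, hn1c] at hcr
    rw [hc]
    apply supval
    · rintro z ⟨θ, ⟨θ'', hθ''Γ, hlt, hθc⟩, rfl⟩
      have hq'' := hmemq θ'' hθ''Γ
      have h2 := hboundii hqt hnt1 (by linarith only [hcr]) (θ'' 0) (θ'' 1) hq'' hθc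
      calc v ⬝ᵥ θ ≤ v ⬝ᵥ θ'' := hdom θ θ'' hlt
        _ ≤ v ⬝ᵥ tθ1r := by rw [hdot θ'', hvt]; linarith only [h2]
    · intro δ hδ
      obtain ⟨θ', hθ'Γ, hθ'0, hval⟩ := hclos hqt hnt1 (δ/2) (by linarith only [hδ])
      obtain ⟨z, hz, hzval⟩ := hDmem xt θ' hθ'Γ hθ'0 (δ/2) (by linarith only [hδ])
      exact ⟨z, hz, by linarith only [hval, hzval]⟩
  · -- case (iii)
    intro hγ2 hgt hcr
    obtain ⟨hqt, hnt1, hc⟩ := hshared hγ2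
    rw [hn0c, hn1c] at hcr
    rw [hc]
    apply supeq _ _ hGamNE (himg_ub xt)
    rintro z ⟨θ', hθ'Γ, rfl⟩ δ hδ
    have hq' := hmemq θ' hθ'Γ
    by_cases hx : θ' 0 < xt
    · exact hDmem xt θ' hθ'Γ hx δ hδ
    · push_neg at hx
      have hb := hboundiii hqt hnt1 (by linarith only [hcr]) (θ' 0) (θ' 1) hq' hx
      obtain ⟨θc, hθcΓ, hθc0, hval⟩ := hclos hqt hnt1 (δ/2) (by linarith only [hδ])
      obtain ⟨z2, hz2, hzval⟩ := hDmem xt θc hθcΓ hθc0 (δ/2) (by linarith only [hδ])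
      refine ⟨z2, hz2, ?_⟩
      have h5 : v ⬝ᵥ θ' ≤ v ⬝ᵥ tθ1r := by rw [hdot θ', hvt]; linarith only [hb]
      show v ⬝ᵥ θ' - δ ≤ z2
      linarith only [h5, hval, hzval]
  · -- case (iv)
    intro hγ2le
    have hc : θΓ1 0 = xm := by rw [hθΓ1, if_pos hγ2le, hxm_def]
    rw [hc]
    apply supeq _ _ hGamNE (himg_ub xm)
    rintro z ⟨θ', hθ'Γ, rfl⟩ δ hδ
    have hq' := hmemq θ' hθ'Γ
    have hx : θ' 0 < xm := hM (θ' 0) (θ' 1) hq'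
    exact hDmem xm θ' hθ'Γ hx δ hδ
end
end

section
/- Assume conditions (P) and (S). Then 𝒟^(1) ∩ 𝒟^(2) = {θ ∈ ℝ² : there exists θ' ∈ Γ with θ < θ' componentwise, θ'₁ < θ^(1,Γ)₁ and θ'₂ < θ^(2,Γ)₂}, and moreover: in Category I, 𝒟^(1) ∩ 𝒟^(2) = {θ ∈ Γ_max : θ₁ < θ^(1,Γ)₁ and θ₂ < θ^(2,Γ)₂}; in Category II, 𝒟^(1) ∩ 𝒟^(2) = {θ ∈ ℝ² : θ < θ̃^(2,r) componentwise}; in Category III, 𝒟^(1) ∩ 𝒟^(2) = {θ ∈ ℝ² : θ < θ̃^(1,r) componentwise}. -/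
open Matrix Set

noncomputable section

namespace Stmt2Aux

variable {s00 s01 s11 u0 u1 X Y X2 Y2 r00 r01 r10 r11 : ℝ}

/-- quadratic form -/
noncomputable def Qq (s00 s01 s11 x y : ℝ) : ℝ := s00*x^2 + 2*s01*x*y + s11*y^2
/-- the concave quadratic γ -/
noncomputable def qq (s00 s01 s11 u0 u1 x y : ℝ) : ℝ := -(1/2)*Qq s00 s01 s11 x y - (u0*x + u1*y)


lemma Qq_nonneg (hs00 : 0 < s00) (hdet : 0 < s00*s11 - s01^2) (x y : ℝ) :
    0 ≤ Qq s00 s01 s11 x y := by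
  have h1 := sq_nonneg (s00*x + s01*y)
  have h2 := mul_nonneg hdet.le (sq_nonneg y)
  have : 0 ≤ s00 * Qq s00 s01 s11 x y := by simp only [Qq]; nlinarith
  nlinarith

lemma Qq_pos (hs00 : 0 < s00) (hdet : 0 < s00*s11 - s01^2) {x y : ℝ}
    (h : x ≠ 0 ∨ y ≠ 0) : 0 < Qq s00 s01 s11 x y := by
  rcases eq_or_ne y 0 with rfl | hy
  · have hx : x ≠ 0 := h.resolve_right (by simp)
    have : 0 < s00 * x^2 := mul_pos hs00 (pow_two_pos_of_ne_zero hx)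
    simp only [Qq]; nlinarith
  · have h2 := mul_pos hdet (pow_two_pos_of_ne_zero hy)
    have h1 := sq_nonneg (s00*x + s01*y)
    have : 0 < s00 * Qq s00 s01 s11 x y := by simp only [Qq]; nlinarith
    nlinarith

lemma qq_zero : qq s00 s01 s11 u0 u1 0 0 = 0 := by simp [qq, Qq]

lemma qq_swap (x y : ℝ) : qq s00 s01 s11 u0 u1 x y = qq s11 s01 s00 u1 u0 y x := by
  simp only [qq, Qq]; ring

lemma qcomb (t x x' y y' : ℝ) :
    qq s00 s01 s11 u0 u1 ((1-t)*x + t*x') ((1-t)*y + t*y')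
      = (1-t)*qq s00 s01 s11 u0 u1 x y + t*qq s00 s01 s11 u0 u1 x' y'
        + t*(1-t)*(1/2)*Qq s00 s01 s11 (x-x') (y-y') := by
  simp only [qq, Qq]; ring

lemma qlin (d ux uy x y : ℝ) :
    qq s00 s01 s11 u0 u1 (x + d*ux) (y + d*uy)
      = qq s00 s01 s11 u0 u1 x y
        - d*((s00*x+s01*y+u0)*ux + (s01*x+s11*y+u1)*uy)
        - d^2*(1/2)*Qq s00 s01 s11 ux uy := by
  simp only [qq, Qq]; ring


lemma grad_at_max (hs00 : 0 < s00) (hdet : 0 < s00*s11 - s01^2)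
    (hu : u0 ≠ 0 ∨ u1 ≠ 0)
    (hX : qq s00 s01 s11 u0 u1 X Y = 0)
    (hmax : ∀ x y, qq s00 s01 s11 u0 u1 x y = 0 → x ≤ X) :
    s01*X + s11*Y + u1 = 0 ∧ 0 < s00*X + s01*Y + u0 := by
  set g0 := s00*X + s01*Y + u0 with hg0def
  set g1 := s01*X + s11*Y + u1 with hg1def
  have key : ∀ ux uy : ℝ, (ux ≠ 0 ∨ uy ≠ 0) → 0 ≤ (g0*ux + g1*uy) * ux := by
    intro ux uy h
    have hQ : 0 < Qq s00 s01 s11 ux uy := Qq_pos hs00 hdet h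
    set d := -2*(g0*ux+g1*uy)/Qq s00 s01 s11 ux uy with hd
    have hroot : qq s00 s01 s11 u0 u1 (X + d*ux) (Y + d*uy) = 0 := by
      rw [qlin, hX, hd]
      field_simp
      ring
    have h2 := hmax _ _ hroot
    have hdux : d*ux ≤ 0 := by linarith
    have hrw : (g0*ux + g1*uy)*ux = -(d*ux)*(Qq s00 s01 s11 ux uy)/2 := by
      rw [hd]; field_simp
    rw [hrw]
    have : 0 ≤ -(d*ux) := by linarith
    positivity
  have hg0 : 0 ≤ g0 := by have := key 1 0 (Or.inl one_ne_zero); nlinarith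
  have hg1 : g1 = 0 := by
    rcases eq_or_ne g1 0 with h | h
    · exact h
    · have := key (-g1) (g0+1) (Or.inl (neg_ne_zero.2 h))
      have h2 : (0:ℝ) < g1^2 := pow_two_pos_of_ne_zero h
      nlinarith
  refine ⟨hg1, ?_⟩
  rcases hg0.lt_or_eq with h | h
  · exact h
  · exfalso
    -- g0 = 0 and g1 = 0
    have e0 : s00*X + s01*Y = -u0 := by rw [hg0def] at h; linarith
    have e1 : s01*X + s11*Y = -u1 := by rw [hg1def] at hg1; linarith
    have hq2 : u0*X + u1*Y = 0 := by
      have : qq s00 s01 s11 u0 u1 X Y = -(1/2)*(u0*X + u1*Y) := by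
        simp only [qq, Qq]; linear_combination (-(1/2)*X) * e0 + (-(1/2)*Y) * e1
      rw [hX] at this; linarith
    have hQ0 : Qq s00 s01 s11 X Y = 0 := by
      simp only [Qq]; linear_combination X*e0 + Y*e1 - hq2
    have hXY : X = 0 ∧ Y = 0 := by
      by_contra hc
      have : X ≠ 0 ∨ Y ≠ 0 := by tauto
      have := Qq_pos hs00 hdet this
      linarith
    obtain ⟨hX0, hY0⟩ := hXY
    rcases hu with h' | h'
    · apply h'; rw [hX0, hY0] at e0; linarith
    · apply h'; rw [hX0, hY0] at e1; linarith

lemma max_unique (hs00 : 0 < s00) (hdet : 0 < s00*s11 - s01^2)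
    (hu : u0 ≠ 0 ∨ u1 ≠ 0)
    (hX : qq s00 s01 s11 u0 u1 X Y = 0)
    (hmax : ∀ x y, qq s00 s01 s11 u0 u1 x y = 0 → x ≤ X)
    {y' : ℝ} (h : qq s00 s01 s11 u0 u1 X y' = 0) : y' = Y := by
  obtain ⟨hg1, hg0⟩ := grad_at_max hs00 hdet hu hX hmax
  have hs11 : 0 < s11 := by nlinarith [sq_nonneg s01]
  have := qlin (s00 := s00) (s01 := s01) (s11 := s11) (u0 := u0) (u1 := u1) 1 0 (y'-Y) X Y
  simp only [mul_zero, add_zero, one_mul] at this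
  rw [hX] at this
  rw [show Y + (y'-Y) = y' by ring] at this
  rw [h] at this
  have hQ : Qq s00 s01 s11 0 (y'-Y) = s11*(y'-Y)^2 := by simp only [Qq]; ring
  rw [hQ, hg1] at this
  have : s11*(y'-Y)^2 = 0 := by nlinarith
  have : (y'-Y)^2 = 0 := by
    rcases mul_eq_zero.mp this with h' | h'
    · exact absurd h' (ne_of_gt hs11)
    · exact h'
  have := pow_eq_zero_iff (n := 2) (by norm_num) |>.mp this
  linarith

lemma lt_max_of_pos (hs00 : 0 < s00) (hdet : 0 < s00*s11 - s01^2)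
    (hX : qq s00 s01 s11 u0 u1 X Y = 0)
    (hmax : ∀ x y, qq s00 s01 s11 u0 u1 x y = 0 → x ≤ X)
    {x y : ℝ} (h : 0 < qq s00 s01 s11 u0 u1 x y) : x < X := by
  set gx := s00*x + s01*y + u0 with hgx
  set q := qq s00 s01 s11 u0 u1 x y with hq
  set r := Real.sqrt (gx^2 + 2*s00*q) with hr
  have hrsq : r^2 = gx^2 + 2*s00*q := Real.sq_sqrt (by nlinarith [sq_nonneg gx])
  have hr0 : 0 ≤ r := Real.sqrt_nonneg _
  have hrg : gx < r := by nlinarith [mul_pos hs00 h]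
  set d := (r - gx)/s00 with hd
  have hd0 : 0 < d := div_pos (by linarith) hs00
  have hroot : qq s00 s01 s11 u0 u1 (x + d*1) (y + d*0) = 0 := by
    rw [qlin]
    have hQ : Qq s00 s01 s11 1 0 = s00 := by simp [Qq]
    rw [hQ, ← hgx, ← hq, hd]
    field_simp
    linear_combination (-1)*hrsq
  have := hmax _ _ hroot
  nlinarith


/-- the ray point `a = c1 • (r11, -r01)` is on the ellipse -/
lemma ray_on (hc1 : c1 * Qq s00 s01 s11 r11 (-r01) = -2*(u0*r11 - u1*r01)) :
    qq s00 s01 s11 u0 u1 (c1*r11) (c1*(-r01)) = 0 := by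
  simp only [qq, Qq] at hc1 ⊢
  linear_combination (-(1/2)*c1) * hc1

set_option maxHeartbeats 1000000 in
/-- C1 chord lemma: on the side γ₂ ≤ 0, the ellipse region lies left of a₀. -/
lemma cap_bound (hs00 : 0 < s00) (hdet : 0 < s00*s11 - s01^2)
    (hr11 : 0 < r11) (hmuS : u0*r11 - u1*r01 < 0)
    (hc1 : c1 * Qq s00 s01 s11 r11 (-r01) = -2*(u0*r11 - u1*r01))
    (hX : qq s00 s01 s11 u0 u1 X Y = 0)
    (hmax : ∀ x y, qq s00 s01 s11 u0 u1 x y = 0 → x ≤ X)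
    (hside : 0 < r01*X + r11*Y)
    {y0 y1 : ℝ}
    (hy : 0 ≤ qq s00 s01 s11 u0 u1 y0 y1) (hyg : r01*y0 + r11*y1 ≤ 0) :
    y0 ≤ c1*r11 ∧ (0 < qq s00 s01 s11 u0 u1 y0 y1 → y0 < c1*r11) := by
  have hqp : 0 < Qq s00 s01 s11 r11 (-r01) := Qq_pos hs00 hdet (Or.inl (ne_of_gt hr11))
  have hc1pos : 0 < c1 := by nlinarith
  have qa : qq s00 s01 s11 u0 u1 (c1*r11) (c1*(-r01)) = 0 := ray_on hc1
  have hXa : c1*r11 ≤ X := hmax _ _ qa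
  have hden : 0 < (r01*X + r11*Y) - (r01*y0 + r11*y1) := by linarith
  obtain ⟨t, ht⟩ : ∃ t : ℝ, t = (-(r01*y0 + r11*y1))/((r01*X + r11*Y) - (r01*y0 + r11*y1)) :=
    ⟨_, rfl⟩
  have ht0 : 0 ≤ t := by rw [ht]; exact div_nonneg (by linarith) hden.le
  have ht1 : t < 1 := by rw [ht, div_lt_one hden]; linarith
  have hzg : r01*((1-t)*y0 + t*X) + r11*((1-t)*y1 + t*Y) = 0 := by
    rw [ht]; field_simp; ring
  have hqz : (1-t)*qq s00 s01 s11 u0 u1 y0 y1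
      ≤ qq s00 s01 s11 u0 u1 ((1-t)*y0 + t*X) ((1-t)*y1 + t*Y) := by
    rw [qcomb, hX]
    have h1 : 0 ≤ t*(1-t)*(1/2)*Qq s00 s01 s11 (y0-X) (y1-Y) :=
      mul_nonneg (by nlinarith) (Qq_nonneg hs00 hdet _ _)
    linarith
  obtain ⟨sv, hsv⟩ : ∃ sv : ℝ, sv = ((1-t)*y0 + t*X)/r11 := ⟨_, rfl⟩
  have hz0s : (1-t)*y0 + t*X = sv*r11 := by rw [hsv]; field_simp
  have hz1s : (1-t)*y1 + t*Y = sv*(-r01) := by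
    have h2 : r11*((1-t)*y1 + t*Y) = r11*(sv*(-r01)) := by
      rw [hsv]; field_simp; linear_combination hzg
    exact mul_left_cancel₀ (ne_of_gt hr11) h2
  have hqzval : qq s00 s01 s11 u0 u1 ((1-t)*y0 + t*X) ((1-t)*y1 + t*Y)
      = (Qq s00 s01 s11 r11 (-r01)/2)*sv*(c1 - sv) := by
    rw [hz0s, hz1s]
    simp only [qq, Qq] at hc1 ⊢
    linear_combination (-(sv/2)) * hc1
  have hyq' : 0 ≤ (1-t)*qq s00 s01 s11 u0 u1 y0 y1 :=
    mul_nonneg (by linarith) hy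
  have hprod : 0 ≤ (Qq s00 s01 s11 r11 (-r01)/2)*sv*(c1 - sv) := by
    rw [← hqzval]; linarith
  have hs_le : sv ≤ c1 := by
    by_contra hcon
    push_neg at hcon
    have h3 : (0:ℝ) < sv := lt_trans hc1pos hcon
    have h4 : c1 - sv < 0 := by linarith
    nlinarith [mul_pos (div_pos hqp two_pos) h3]
  have hz0le : (1-t)*y0 + t*X ≤ c1*r11 := by
    rw [hz0s]; exact mul_le_mul_of_nonneg_right hs_le hr11.le
  have htX : t*(c1*r11) ≤ t*X := mul_le_mul_of_nonneg_left hXa ht0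
  constructor
  · by_contra hcon
    push_neg at hcon
    have := mul_lt_mul_of_pos_left hcon (by linarith : (0:ℝ) < 1-t)
    linarith
  · intro hy'
    have hqzpos : 0 < (Qq s00 s01 s11 r11 (-r01)/2)*sv*(c1 - sv) := by
      rw [← hqzval]
      have := mul_pos (by linarith : (0:ℝ) < 1-t) hy'
      linarith
    have hsvpos : 0 < sv := by
      by_contra hcon
      push_neg at hcon
      have h4 : (0:ℝ) < c1 - sv := by linarith
      have h5 : 0 ≤ (Qq s00 s01 s11 r11 (-r01)/2 * (c1 - sv)) * (-sv) :=
        mul_nonneg (mul_pos (div_pos hqp two_pos) h4).le (neg_nonneg.2 hcon)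
      nlinarith [h5]
    have hsvlt : sv < c1 := by
      by_contra hcon
      push_neg at hcon
      have h4 : (0:ℝ) < sv := by linarith
      have h4b : c1 - sv ≤ 0 := by linarith
      have h5 : 0 ≤ (Qq s00 s01 s11 r11 (-r01)/2 * sv) * (-(c1 - sv)) :=
        mul_nonneg (mul_pos (div_pos hqp two_pos) h4).le (neg_nonneg.2 h4b)
      nlinarith [h5]
    have hz0lt : (1-t)*y0 + t*X < c1*r11 := by
      rw [hz0s]; exact mul_lt_mul_of_pos_right hsvlt hr11
    by_contra hcon
    push_neg at hcon
    have := mul_le_mul_of_nonneg_left hcon (by linarith : (0:ℝ) ≤ 1-t)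
    linarith


/-- ray point for the second ray `b = c2 • (-r10, r00)` is on the ellipse -/
lemma ray_on2 (hc2 : c2 * Qq s00 s01 s11 (-r10) r00 = -2*(u1*r00 - u0*r10)) :
    qq s00 s01 s11 u0 u1 (c2*(-r10)) (c2*r00) = 0 := by
  simp only [qq, Qq] at hc2 ⊢
  linear_combination (-(1/2)*c2) * hc2

set_option maxHeartbeats 1000000 in
/-- If γ₁(θmax2) > 0, the gradient x-component at θray2 is ≤ 0. -/
lemma ray_normal_nonpos (hs00 : 0 < s00) (hdet : 0 < s00*s11 - s01^2)
    (hr00 : 0 < r00) (hmuS2 : u1*r00 - u0*r10 < 0)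
    (hc2 : c2 * Qq s00 s01 s11 (-r10) r00 = -2*(u1*r00 - u0*r10))
    (hX2 : qq s00 s01 s11 u0 u1 X2 Y2 = 0)
    (hmaxY : ∀ x y, qq s00 s01 s11 u0 u1 x y = 0 → y ≤ Y2)
    (hside2 : 0 < r00*X2 + r10*Y2) :
    s00*(c2*(-r10)) + s01*(c2*r00) + u0 ≤ 0 := by
  by_contra hH
  push_neg at hH
  have hs11 : 0 < s11 := by nlinarith [sq_nonneg s01]
  have hdet' : 0 < s11*s00 - s01^2 := by nlinarith
  have hQswap : Qq s11 s01 s00 r00 (-r10) = Qq s00 s01 s11 (-r10) r00 := by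
    simp only [Qq]; ring
  have hc2' : c2 * Qq s11 s01 s00 r00 (-r10) = -2*(u1*r00 - u0*r10) := by
    rw [hQswap]; exact hc2
  have hX' : qq s11 s01 s00 u1 u0 Y2 X2 = 0 := by rw [← qq_swap]; exact hX2
  have hmax' : ∀ x y, qq s11 s01 s00 u1 u0 x y = 0 → x ≤ Y2 := by
    intro x y h
    exact hmaxY y x (by rw [qq_swap]; exact h)
  have hside' : 0 < r10*Y2 + r00*X2 := by linarith
  -- the ray point b
  have qb : qq s00 s01 s11 u0 u1 (c2*(-r10)) (c2*r00) = 0 := ray_on2 hc2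
  obtain ⟨b0, hb0⟩ : ∃ b0 : ℝ, b0 = c2*(-r10) := ⟨_, rfl⟩
  obtain ⟨b1, hb1⟩ : ∃ b1 : ℝ, b1 = c2*r00 := ⟨_, rfl⟩
  rw [← hb0, ← hb1] at qb
  obtain ⟨H0, hH0⟩ : ∃ H0 : ℝ, H0 = s00*b0 + s01*b1 + u0 := ⟨_, rfl⟩
  have hHpos : 0 < H0 := by rw [hH0, hb0, hb1]; exact hH
  obtain ⟨x0, hx0⟩ : ∃ x0 : ℝ, x0 = b0 - H0/s00 := ⟨_, rfl⟩
  have hQ10 : Qq s00 s01 s11 (-1) 0 = s00 := by simp only [Qq]; ring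
  have qx : qq s00 s01 s11 u0 u1 x0 b1 = H0^2/(2*s00) := by
    have h := qlin (s00 := s00) (s01 := s01) (s11 := s11) (u0 := u0) (u1 := u1)
      (H0/s00) (-1) 0 b0 b1
    rw [qb, hQ10] at h
    rw [show b0 + H0/s00*(-1) = b0 - H0/s00 by ring, ← hx0] at h
    rw [show b1 + H0/s00*0 = b1 by ring] at h
    rw [h, ← hH0]
    field_simp
    ring
  have hgb : r00*b0 + r10*b1 = 0 := by rw [hb0, hb1]; ring
  have hgx : r00*x0 + r10*b1 = -(r00*(H0/s00)) := by
    rw [hx0]; field_simp; linear_combination s00 * hgb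
  obtain ⟨g1x, hg1x⟩ : ∃ g : ℝ, g = s01*x0 + s11*b1 + u1 := ⟨_, rfl⟩
  have hApos : 0 < (H0^2/(2*s00))/(|g1x| + s11 + 1) := by positivity
  have hBpos : 0 < (r00*(H0/s00))/(|r10| + 1) := by positivity
  obtain ⟨ε, hε⟩ : ∃ ε : ℝ, ε = min 1 (min ((H0^2/(2*s00))/(|g1x| + s11 + 1))
      ((r00*(H0/s00))/(|r10| + 1))) := ⟨_, rfl⟩
  have hεpos : 0 < ε := by rw [hε]; exact lt_min one_pos (lt_min hApos hBpos)
  have hε1 : ε ≤ 1 := by rw [hε]; exact min_le_left _ _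
  have hεA : ε*(|g1x| + s11 + 1) ≤ H0^2/(2*s00) := by
    have h1 : ε ≤ (H0^2/(2*s00))/(|g1x| + s11 + 1) := by
      rw [hε]; exact le_trans (min_le_right _ _) (min_le_left _ _)
    have h2 : (0:ℝ) < |g1x| + s11 + 1 := by positivity
    calc ε*(|g1x| + s11 + 1) ≤ ((H0^2/(2*s00))/(|g1x| + s11 + 1))*(|g1x| + s11 + 1) :=
          mul_le_mul_of_nonneg_right h1 h2.le
      _ = H0^2/(2*s00) := by field_simp
  have hεB : ε*(|r10| + 1) ≤ r00*(H0/s00) := by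
    have h1 : ε ≤ (r00*(H0/s00))/(|r10| + 1) := by
      rw [hε]; exact le_trans (min_le_right _ _) (min_le_right _ _)
    have h2 : (0:ℝ) < |r10| + 1 := by positivity
    calc ε*(|r10| + 1) ≤ ((r00*(H0/s00))/(|r10| + 1))*(|r10| + 1) :=
          mul_le_mul_of_nonneg_right h1 h2.le
      _ = r00*(H0/s00) := by field_simp
  have hQ01 : Qq s00 s01 s11 0 1 = s11 := by simp only [Qq]; ring
  have hq2 : 0 < qq s00 s01 s11 u0 u1 x0 (b1 + ε) := by
    have h := qlin (s00 := s00) (s01 := s01) (s11 := s11) (u0 := u0) (u1 := u1)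
      ε 0 1 x0 b1
    rw [qx, hQ01] at h
    rw [show x0 + ε*0 = x0 by ring, show b1 + ε*1 = b1 + ε by ring] at h
    rw [h, ← hg1x]
    have e1 : ε*g1x ≤ ε*|g1x| := mul_le_mul_of_nonneg_left (le_abs_self g1x) hεpos.le
    have hsq : ε*ε ≤ ε := by nlinarith
    have e2 : ε^2*(1/2)*s11 ≤ ε*s11 := by nlinarith [mul_le_mul_of_nonneg_right hsq hs11.le]
    nlinarith
  have hyg2 : r10*(b1 + ε) + r00*x0 ≤ 0 := by
    have e1 : ε*r10 ≤ ε*|r10| := mul_le_mul_of_nonneg_left (le_abs_self r10) hεpos.le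
    nlinarith [hgx]
  -- apply the swapped strict cap bound
  have hcap := cap_bound (s00 := s11) (s01 := s01) (s11 := s00) (u0 := u1) (u1 := u0)
    (r11 := r00) (r01 := r10) (X := Y2) (Y := X2) (c1 := c2)
    hs11 hdet' hr00 hmuS2 hc2' hX' hmax' hside'
    (y0 := b1 + ε) (y1 := x0)
    (by rw [← qq_swap]; exact hq2.le) hyg2
  have := hcap.2 (by rw [← qq_swap]; exact hq2)
  rw [← hb1] at this
  linarith

lemma other_root (hs00 : 0 < s00)
    (hb : qq s00 s01 s11 u0 u1 b0 b1 = 0) (hw : qq s00 s01 s11 u0 u1 w0 b1 = 0)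
    (hne : w0 ≠ b0) :
    (w0 - b0)*s00 = -2*(s00*b0 + s01*b1 + u0) := by
  have hQ10 : Qq s00 s01 s11 1 0 = s00 := by simp only [Qq]; ring
  have h := qlin (s00 := s00) (s01 := s01) (s11 := s11) (u0 := u0) (u1 := u1)
    (w0 - b0) 1 0 b0 b1
  rw [hb, hQ10, show b0 + (w0-b0)*1 = w0 by ring, show b1 + (w0-b0)*0 = b1 by ring, hw] at h
  have key : (w0 - b0)*((s00*b0 + s01*b1 + u0) + (w0 - b0)*s00/2) = 0 := by
    linear_combination h
  rcases mul_eq_zero.mp key with h' | h'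
  · exact absurd (sub_eq_zero.mp h') hne
  · linarith

set_option maxHeartbeats 1000000 in
lemma below_chord (hs00 : 0 < s00) (hdet : 0 < s00*s11 - s01^2)
    (hX : qq s00 s01 s11 u0 u1 X Y = 0)
    (hmax : ∀ x y, qq s00 s01 s11 u0 u1 x y = 0 → x ≤ X)
    (hb : qq s00 s01 s11 u0 u1 b0 b1 = 0) (hT : qq s00 s01 s11 u0 u1 T0 b1 = 0)
    (hbT : b0 < T0) (hY : b1 ≤ Y)
    {z0 z1 : ℝ} (hz : 0 < qq s00 s01 s11 u0 u1 z0 z1) (hz1 : z1 < b1) : z0 ≤ T0 := by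
  by_contra hcon
  push_neg at hcon
  have hroots := other_root hs00 hb hT hbT.ne'
  have hfac : ∀ w0 : ℝ, qq s00 s01 s11 u0 u1 w0 b1 = -(s00/2)*((w0-b0)*(w0-T0)) := by
    intro w0
    have hQ10 : Qq s00 s01 s11 1 0 = s00 := by simp only [Qq]; ring
    have h := qlin (s00 := s00) (s01 := s01) (s11 := s11) (u0 := u0) (u1 := u1)
      (w0 - b0) 1 0 b0 b1
    rw [hb, hQ10, show b0 + (w0-b0)*1 = w0 by ring, show b1 + (w0-b0)*0 = b1 by ring] at h
    rw [h]
    linear_combination (-(w0-b0)/2) * hroots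
  have hXT : T0 ≤ X := hmax T0 b1 hT
  have hden : 0 < Y - z1 := by linarith
  obtain ⟨t, ht⟩ : ∃ t : ℝ, t = (b1 - z1)/(Y - z1) := ⟨_, rfl⟩
  have ht0 : 0 < t := by rw [ht]; exact div_pos (by linarith) hden
  have ht1 : t ≤ 1 := by rw [ht, div_le_one hden]; linarith
  have hw1 : (1-t)*z1 + t*Y = b1 := by rw [ht]; field_simp; ring
  have hqw : (1-t)*qq s00 s01 s11 u0 u1 z0 z1
      ≤ qq s00 s01 s11 u0 u1 ((1-t)*z0 + t*X) ((1-t)*z1 + t*Y) := by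
    rw [qcomb, hX]
    have h1 : 0 ≤ t*(1-t)*(1/2)*Qq s00 s01 s11 (z0-X) (z1-Y) :=
      mul_nonneg (by nlinarith) (Qq_nonneg hs00 hdet _ _)
    linarith
  rw [hw1] at hqw
  obtain ⟨W, hWdef⟩ : ∃ W : ℝ, W = (1-t)*z0 + t*X := ⟨_, rfl⟩
  rw [← hWdef] at hqw
  rcases ht1.lt_or_eq with htlt | hteq
  · have hqwpos : 0 < qq s00 s01 s11 u0 u1 W b1 := by
      have := mul_pos (by linarith : (0:ℝ) < 1-t) hz
      linarith
    rw [hfac] at hqwpos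
    have hW : T0 < W := by
      rw [hWdef]
      have h1 := mul_lt_mul_of_pos_left hcon (by linarith : (0:ℝ) < 1-t)
      have h2 := mul_le_mul_of_nonneg_left hXT ht0.le
      linarith
    have hp := mul_pos (by linarith : (0:ℝ) < W - b0) (by linarith : (0:ℝ) < W - T0)
    nlinarith [hqwpos, hp, hs00]
  · -- t = 1, so b1 = Y and X is on the line
    have hb1Y : b1 = Y := by
      rw [hteq] at ht
      have h3 : b1 - z1 = Y - z1 := by
        field_simp at ht
        linarith
      linarith
    have hqXb1 : qq s00 s01 s11 u0 u1 X b1 = 0 := by rw [hb1Y]; exact hX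
    rw [hfac] at hqXb1
    have h2 : (X-b0)*(X-T0) = 0 := by
      have h4 : (s00/2) * ((X-b0)*(X-T0)) = 0 := by linarith
      rcases mul_eq_zero.mp h4 with h | h
      · exfalso; have := hs00; rw [show s00/2 = 0 ↔ s00 = 0 from by constructor <;> intro <;> linarith] at h; linarith
      · exact h
    have hXT0 : X = T0 := by
      rcases mul_eq_zero.mp h2 with h | h
      · exfalso; linarith
      · linarith
    have := lt_max_of_pos hs00 hdet hX hmax hz
    linarith


set_option maxHeartbeats 1000000 in
/-- combine separate witnesses into a joint one (part 1, hard direction) -/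
lemma combine (hs00 : 0 < s00) (hdet : 0 < s00*s11 - s01^2)
    {c0 c1 p0 p1 a0 a1 b0 b1 : ℝ} (hc0 : 0 < c0) (hc1 : 0 < c1)
    (ha : 0 < qq s00 s01 s11 u0 u1 a0 a1) (hpa0 : p0 < a0) (hpa1 : p1 < a1) (ha0 : a0 < c0)
    (hb : 0 < qq s00 s01 s11 u0 u1 b0 b1) (hpb0 : p0 < b0) (hpb1 : p1 < b1) (hb1 : b1 < c1) :
    ∃ z0 z1, 0 < qq s00 s01 s11 u0 u1 z0 z1 ∧ p0 < z0 ∧ p1 < z1 ∧ z0 < c0 ∧ z1 < c1 := by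
  by_cases hA : a1 < c1
  · exact ⟨a0, a1, ha, hpa0, hpa1, ha0, hA⟩
  by_cases hB : b0 < c0
  · exact ⟨b0, b1, hb, hpb0, hpb1, hB, hb1⟩
  push_neg at hA hB
  -- case 3 : c1 ≤ a1, c0 ≤ b0
  have hba : 0 < b0 - a0 := by linarith
  have hab1 : 0 < a1 - b1 := by linarith
  obtain ⟨tt, htt⟩ : ∃ t : ℝ, t = (c0 - a0)/(b0 - a0) := ⟨_, rfl⟩
  have htt0 : 0 < tt := by rw [htt]; exact div_pos (by linarith) hba
  have htt1 : tt ≤ 1 := by rw [htt, div_le_one hba]; linarith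
  have hy0 : (1-tt)*a0 + tt*b0 = c0 := by rw [htt]; field_simp; ring
  obtain ⟨y1, hy1def⟩ : ∃ y : ℝ, y = (1-tt)*a1 + tt*b1 := ⟨_, rfl⟩
  have hqy : 0 < qq s00 s01 s11 u0 u1 c0 y1 := by
    rw [← hy0, hy1def]
    rw [qcomb]
    have h1 : 0 ≤ tt*(1-tt)*(1/2)*Qq s00 s01 s11 (a0-b0) (a1-b1) :=
      mul_nonneg (by nlinarith) (Qq_nonneg hs00 hdet _ _)
    nlinarith [mul_nonneg (by linarith : (0:ℝ) ≤ 1-tt) ha.le, mul_pos htt0 hb]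
  have hy1b : b1 ≤ y1 := by
    rw [hy1def]
    nlinarith [mul_le_mul_of_nonneg_left (le_of_lt (show b1 < a1 by linarith))
      (by linarith : (0:ℝ) ≤ 1-tt)]
  have hy1a : y1 ≤ a1 := by
    rw [hy1def]
    nlinarith [mul_le_mul_of_nonneg_left (le_of_lt (show b1 < a1 by linarith)) htt0.le]
  by_cases hy1c : y1 < c1
  · -- case 3a : step back slightly along the segment
    obtain ⟨δ, hδ⟩ : ∃ d : ℝ, d = (1/2)*min tt ((c1 - y1)/(a1 - b1)) := ⟨_, rfl⟩
    have hδ0 : 0 < δ := by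
      rw [hδ]
      have := div_pos (by linarith : (0:ℝ) < c1 - y1) hab1
      have := lt_min htt0 this
      linarith [lt_min htt0 (div_pos (by linarith : (0:ℝ) < c1 - y1) hab1)]
    have hδtt : δ ≤ tt/2 := by
      rw [hδ]
      have := min_le_left tt ((c1 - y1)/(a1 - b1))
      linarith
    have hδc : δ*(a1-b1) ≤ (c1-y1)/2 := by
      have h1 : (1/2)*((c1 - y1)/(a1 - b1)) * (a1-b1) = (c1-y1)/2 := by field_simp
      have h2 : δ ≤ (1/2)*((c1 - y1)/(a1 - b1)) := by
        rw [hδ]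
        have := min_le_right tt ((c1 - y1)/(a1 - b1))
        linarith
      calc δ*(a1-b1) ≤ ((1/2)*((c1 - y1)/(a1 - b1)))*(a1-b1) :=
            mul_le_mul_of_nonneg_right h2 hab1.le
        _ = (c1-y1)/2 := h1
    refine ⟨(1-(tt-δ))*a0 + (tt-δ)*b0, (1-(tt-δ))*a1 + (tt-δ)*b1, ?_, ?_, ?_, ?_, ?_⟩
    · rw [qcomb]
      have h1 : 0 ≤ (tt-δ)*(1-(tt-δ))*(1/2)*Qq s00 s01 s11 (a0-b0) (a1-b1) :=
        mul_nonneg (mul_nonneg (mul_nonneg (by linarith) (by linarith)) (by norm_num))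
          (Qq_nonneg hs00 hdet _ _)
      nlinarith [mul_nonneg (by linarith : (0:ℝ) ≤ 1-(tt-δ)) ha.le,
        mul_pos (by linarith : (0:ℝ) < tt-δ) hb]
    · nlinarith [mul_le_mul_of_nonneg_left hba.le (by linarith : (0:ℝ) ≤ tt-δ)]
    · -- p1 < z1 : z1 = y1 + δ(a1-b1) ≥ y1 ≥ b1 > p1
      have : (1-(tt-δ))*a1 + (tt-δ)*b1 = y1 + δ*(a1-b1) := by rw [hy1def]; ring
      rw [this]
      nlinarith [mul_nonneg hδ0.le hab1.le]
    · -- z0 < c0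
      have : (1-(tt-δ))*a0 + (tt-δ)*b0 = c0 - δ*(b0-a0) := by
        rw [← hy0]; ring
      rw [this]
      nlinarith [mul_pos hδ0 hba]
    · have : (1-(tt-δ))*a1 + (tt-δ)*b1 = y1 + δ*(a1-b1) := by rw [hy1def]; ring
      rw [this]
      linarith [hδc]
  push_neg at hy1c
  rcases hy1c.lt_or_eq with hy1lt | hy1eq
  · -- case 3b-ii : y1 > c1, scale down then move toward b
    have hy1pos : 0 < y1 := by linarith
    obtain ⟨uu, huu⟩ : ∃ u : ℝ, u = c1/y1 := ⟨_, rfl⟩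
    have huu0 : 0 < uu := by rw [huu]; exact div_pos hc1 hy1pos
    have huu1 : uu < 1 := by rw [huu, div_lt_one hy1pos]; exact hy1lt
    have huy : uu*y1 = c1 := by rw [huu]; field_simp
    have hqzs : 0 < qq s00 s01 s11 u0 u1 (uu*c0) c1 := by
      have h := qcomb (s00 := s00) (s01 := s01) (s11 := s11) (u0 := u0) (u1 := u1)
        uu 0 c0 0 y1
      rw [qq_zero] at h
      rw [show (1-uu)*0 + uu*c0 = uu*c0 by ring, show (1-uu)*0 + uu*y1 = uu*y1 by ring] at h
      rw [huy] at h
      rw [h]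
      have h1 : 0 ≤ uu*(1-uu)*(1/2)*Qq s00 s01 s11 (0-c0) (0-y1) :=
        mul_nonneg (mul_nonneg (mul_nonneg huu0.le (by linarith)) (by norm_num))
          (Qq_nonneg hs00 hdet _ _)
      nlinarith [mul_pos huu0 hqy]
    have huc0 : uu*c0 < c0 := by nlinarith
    obtain ⟨m, hm⟩ : ∃ m : ℝ, m = (max p0 (uu*c0) + c0)/2 := ⟨_, rfl⟩
    have hm0 : p0 < m := by
      rw [hm]; have := le_max_left p0 (uu*c0); linarith
    have hmz : uu*c0 < m := by
      rw [hm]; have := le_max_right p0 (uu*c0); linarith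
    have hmc : m < c0 := by
      rw [hm]
      have h1 : max p0 (uu*c0) < c0 := max_lt (by linarith) huc0
      linarith
    have hbu : 0 < b0 - uu*c0 := by linarith
    obtain ⟨sp, hsp⟩ : ∃ s : ℝ, s = (m - uu*c0)/(b0 - uu*c0) := ⟨_, rfl⟩
    have hsp0 : 0 < sp := by rw [hsp]; exact div_pos (by linarith) hbu
    have hsp1 : sp < 1 := by rw [hsp, div_lt_one hbu]; linarith
    have hz0m : (1-sp)*(uu*c0) + sp*b0 = m := by rw [hsp]; field_simp; ring
    refine ⟨(1-sp)*(uu*c0) + sp*b0, (1-sp)*c1 + sp*b1, ?_, ?_, ?_, ?_, ?_⟩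
    · rw [qcomb]
      have h1 : 0 ≤ sp*(1-sp)*(1/2)*Qq s00 s01 s11 (uu*c0-b0) (c1-b1) :=
        mul_nonneg (mul_nonneg (mul_nonneg hsp0.le (by linarith)) (by norm_num))
          (Qq_nonneg hs00 hdet _ _)
      nlinarith [mul_pos (by linarith : (0:ℝ) < 1-sp) hqzs, mul_pos hsp0 hb]
    · rw [hz0m]; exact hm0
    · nlinarith [mul_le_mul_of_nonneg_left (le_of_lt hb1) hsp0.le,
        mul_lt_mul_of_pos_left hpb1 (show (0:ℝ) < sp from hsp0)]
    · rw [hz0m]; exact hmc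
    · nlinarith [mul_lt_mul_of_pos_left hb1 hsp0]
  · -- case 3b-i : y1 = c1, just scale the point (c0, c1)
    obtain ⟨sp, hsp⟩ : ∃ s : ℝ, s = (1/2)*min 1 (min ((c0-p0)/c0) ((c1-p1)/c1)) := ⟨_, rfl⟩
    have hp0c : p0 < c0 := by linarith
    have hp1c : p1 < c1 := by linarith
    have hsp0 : 0 < sp := by
      rw [hsp]
      have h1 := lt_min one_pos (lt_min (div_pos (by linarith : (0:ℝ) < c0-p0) hc0)
        (div_pos (by linarith : (0:ℝ) < c1-p1) hc1))
      linarith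
    have hsp1 : sp ≤ 1/2 := by
      rw [hsp]
      have := min_le_left (1:ℝ) (min ((c0-p0)/c0) ((c1-p1)/c1))
      linarith
    have hspA : sp*c0 ≤ (c0-p0)/2 := by
      have h1 : sp ≤ (1/2)*((c0-p0)/c0) := by
        rw [hsp]
        have := le_trans (min_le_right (1:ℝ) _) (min_le_left ((c0-p0)/c0) ((c1-p1)/c1))
        linarith
      calc sp*c0 ≤ ((1/2)*((c0-p0)/c0))*c0 := mul_le_mul_of_nonneg_right h1 hc0.le
        _ = (c0-p0)/2 := by field_simp
    have hspB : sp*c1 ≤ (c1-p1)/2 := by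
      have h1 : sp ≤ (1/2)*((c1-p1)/c1) := by
        rw [hsp]
        have := le_trans (min_le_right (1:ℝ) _) (min_le_right ((c0-p0)/c0) ((c1-p1)/c1))
        linarith
      calc sp*c1 ≤ ((1/2)*((c1-p1)/c1))*c1 := mul_le_mul_of_nonneg_right h1 hc1.le
        _ = (c1-p1)/2 := by field_simp
    have hqcc : 0 < qq s00 s01 s11 u0 u1 c0 c1 := by rw [hy1eq]; exact hqy
    refine ⟨(1-sp)*c0, (1-sp)*c1, ?_, ?_, ?_, ?_, ?_⟩
    · have h := qcomb (s00 := s00) (s01 := s01) (s11 := s11) (u0 := u0) (u1 := u1)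
        sp c0 0 c1 0
      rw [qq_zero] at h
      rw [show (1-sp)*c0 + sp*0 = (1-sp)*c0 by ring,
        show (1-sp)*c1 + sp*0 = (1-sp)*c1 by ring] at h
      rw [h]
      have h1 : 0 ≤ sp*(1-sp)*(1/2)*Qq s00 s01 s11 (c0-0) (c1-0) :=
        mul_nonneg (mul_nonneg (mul_nonneg hsp0.le (by linarith)) (by norm_num))
          (Qq_nonneg hs00 hdet _ _)
      nlinarith [mul_pos (by linarith : (0:ℝ) < 1-sp) hqcc]
    · nlinarith [hspA]
    · nlinarith [hspB]
    · nlinarith [mul_pos hsp0 hc0]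
    · nlinarith [mul_pos hsp0 hc1]

set_option maxHeartbeats 1000000 in
/-- pull a witness towards a boundary point with smaller first coordinate -/
lemma pull (hs00 : 0 < s00) (hdet : 0 < s00*s11 - s01^2)
    {p0 p1 w0 w1 B0 B1 c0 : ℝ}
    (hw : 0 < qq s00 s01 s11 u0 u1 w0 w1) (hp0 : p0 < w0) (hp1 : p1 < w1)
    (hB : qq s00 s01 s11 u0 u1 B0 B1 = 0) (hB0 : B0 < c0) (hB1 : p1 < B1)
    (hc0w : c0 ≤ w0) (hp0c : p0 < c0) :
    ∃ z0 z1, 0 < qq s00 s01 s11 u0 u1 z0 z1 ∧ p0 < z0 ∧ p1 < z1 ∧ z0 < c0 := by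
  obtain ⟨m, hm⟩ : ∃ m : ℝ, m = (max p0 B0 + c0)/2 := ⟨_, rfl⟩
  have hm0 : p0 < m := by rw [hm]; have := le_max_left p0 B0; linarith
  have hmB : B0 < m := by rw [hm]; have := le_max_right p0 B0; linarith
  have hmc : m < c0 := by
    rw [hm]; have h1 : max p0 B0 < c0 := max_lt hp0c hB0; linarith
  have hwB : 0 < w0 - B0 := by linarith
  obtain ⟨t, ht⟩ : ∃ t : ℝ, t = (w0 - m)/(w0 - B0) := ⟨_, rfl⟩
  have ht0 : 0 < t := by rw [ht]; exact div_pos (by linarith) hwB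
  have ht1 : t < 1 := by rw [ht, div_lt_one hwB]; linarith
  have hz0 : (1-t)*w0 + t*B0 = m := by rw [ht]; field_simp; ring
  refine ⟨(1-t)*w0 + t*B0, (1-t)*w1 + t*B1, ?_, ?_, ?_, ?_⟩
  · rw [qcomb, hB]
    have h1 : 0 ≤ t*(1-t)*(1/2)*Qq s00 s01 s11 (w0-B0) (w1-B1) :=
      mul_nonneg (mul_nonneg (mul_nonneg ht0.le (by linarith)) (by norm_num))
        (Qq_nonneg hs00 hdet _ _)
    nlinarith [mul_pos (by linarith : (0:ℝ) < 1-t) hw]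
  · rw [hz0]; exact hm0
  · nlinarith [mul_lt_mul_of_pos_left hp1 (show (0:ℝ) < 1-t by linarith),
      mul_lt_mul_of_pos_left hB1 ht0]
  · rw [hz0]; exact hmc


set_option maxHeartbeats 2000000 in
/-- Category II master lemma (scalar form). -/
lemma catII_scalar {c1 c2 c0 d1 d2 cc1 T0 T1 X1 Y1 : ℝ}
    (hs00 : 0 < s00) (hdet : 0 < s00*s11 - s01^2) (hu : u0 ≠ 0 ∨ u1 ≠ 0)
    (hr00 : 0 < r00) (hr11 : 0 < r11) (hrdet : 0 < r00*r11 - r01*r10)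
    (hS1 : u0*r11 - u1*r01 < 0) (hS2 : u1*r00 - u0*r10 < 0)
    (hc1 : c1 * Qq s00 s01 s11 r11 (-r01) = -2*(u0*r11 - u1*r01))
    (hc2 : c2 * Qq s00 s01 s11 (-r10) r00 = -2*(u1*r00 - u0*r10))
    (hqX1 : qq s00 s01 s11 u0 u1 X1 Y1 = 0)
    (hmaxX : ∀ x y, qq s00 s01 s11 u0 u1 x y = 0 → x ≤ X1)
    (hqX2 : qq s00 s01 s11 u0 u1 X2 Y2 = 0)
    (hmaxY : ∀ x y, qq s00 s01 s11 u0 u1 x y = 0 → y ≤ Y2)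
    (hG1 : (r01*X1 + r11*Y1 ≤ 0 ∧ c0 = X1 ∧ d1 = Y1) ∨
           (0 < r01*X1 + r11*Y1 ∧ c0 = c1*r11 ∧ d1 = c1*(-r01)))
    (hG2 : (r00*X2 + r10*Y2 ≤ 0 ∧ d2 = X2 ∧ cc1 = Y2) ∨
           (0 < r00*X2 + r10*Y2 ∧ d2 = c2*(-r10) ∧ cc1 = c2*r00))
    (hT : (c2*(-r10) = X2 ∧ c2*r00 = Y2 ∧ T0 = X2 ∧ T1 = Y2) ∨
          (qq s00 s01 s11 u0 u1 T0 T1 = 0 ∧ T1 = c2*r00 ∧ T0 ≠ c2*(-r10)))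
    (hCat2 : d2 ≤ c0) (hCat1 : cc1 ≤ d1) :
    ∀ p0 p1 : ℝ, (∃ z0 z1, 0 < qq s00 s01 s11 u0 u1 z0 z1 ∧ p0 < z0 ∧ p1 < z1 ∧
        z0 < c0 ∧ z1 < cc1) ↔ (p0 < T0 ∧ p1 < T1) := by
  have hs11 : 0 < s11 := by nlinarith [sq_nonneg s01]
  have hdet' : 0 < s11*s00 - s01^2 := by nlinarith
  have hqp1 : 0 < Qq s00 s01 s11 r11 (-r01) := Qq_pos hs00 hdet (Or.inl (ne_of_gt hr11))
  have hqp2 : 0 < Qq s00 s01 s11 (-r10) r00 := Qq_pos hs00 hdet (Or.inr (ne_of_gt hr00))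
  have hc1pos : 0 < c1 := by
    by_contra h; push_neg at h
    nlinarith [mul_nonneg (neg_nonneg.2 h) hqp1.le]
  have hc2pos : 0 < c2 := by
    by_contra h; push_neg at h
    nlinarith [mul_nonneg (neg_nonneg.2 h) hqp2.le]
  have qa : qq s00 s01 s11 u0 u1 (c1*r11) (c1*(-r01)) = 0 := by
    simp only [qq, Qq] at hc1 ⊢; linear_combination (-(1/2)*c1) * hc1
  have qb : qq s00 s01 s11 u0 u1 (c2*(-r10)) (c2*r00) = 0 := ray_on2 hc2
  have ha0X : c1*r11 ≤ X1 := hmaxX _ _ qa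
  have hb1Y2 : c2*r00 ≤ Y2 := hmaxY _ _ qb
  have hqX2' : qq s11 s01 s00 u1 u0 Y2 X2 = 0 := by rw [← qq_swap]; exact hqX2
  have hmaxY' : ∀ x y, qq s11 s01 s00 u1 u0 x y = 0 → x ≤ Y2 := by
    intro x y h; exact hmaxY y x (by rw [qq_swap]; exact h)
  -- eliminate the case θΓ2 = θmax2
  rcases hG2 with ⟨hg2le, hd2, hcc1⟩ | ⟨hg2pos, hd2, hcc1⟩
  · exfalso
    rcases hG1 with ⟨hg1le, hc0, hd1⟩ | ⟨hg1pos, hc0, hd1⟩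
    · -- both maxima: impossible
      have hY12 : Y1 = Y2 := le_antisymm (hmaxY _ _ hqX1) (by rw [← hd1, ← hcc1]; exact hCat1)
      have hX12 : X1 = X2 := by
        have h : qq s11 s01 s00 u1 u0 Y2 X1 = 0 := by
          rw [← hY12, ← qq_swap]; exact hqX1
        exact max_unique hs11 hdet' hu.symm hqX2' hmaxY' h
      have grad1 := grad_at_max hs00 hdet hu hqX1 hmaxX
      have grad2 := grad_at_max hs11 hdet' hu.symm hqX2' hmaxY'
      rw [← hX12, ← hY12] at grad2
      have := grad2.1
      have := grad1.2
      linarith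
    · -- θΓ1 = ray1 and θΓ2 = m2 : forces a = m2, contradiction with γ₁(m2) ≤ 0
      have hY12 : c1*(-r01) = Y2 := le_antisymm (hmaxY _ _ qa) (by rw [← hd1, ← hcc1]; exact hCat1)
      have hX12 : c1*r11 = X2 := by
        have h : qq s11 s01 s00 u1 u0 Y2 (c1*r11) = 0 := by
          rw [← hY12, ← qq_swap]; exact qa
        exact max_unique hs11 hdet' hu.symm hqX2' hmaxY' h
      rw [← hX12, ← hY12] at hg2le
      nlinarith [mul_pos hc1pos hrdet]
  -- now θΓ2 = θray2 = b
  have hb1pos : 0 < c2*r00 := mul_pos hc2pos hr00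
  -- eliminate hT case 1
  rcases hT with ⟨he0, he1, _, _⟩ | ⟨hqT, hT1, hTne⟩
  · exfalso
    rw [← he0, ← he1] at hg2pos
    linarith
  have hqTb : qq s00 s01 s11 u0 u1 T0 (c2*r00) = 0 := by rw [← hT1]; exact hqT
  have hroot := other_root hs00 qb hqTb hTne
  have hH0le : s00*(c2*(-r10)) + s01*(c2*r00) + u0 ≤ 0 :=
    ray_normal_nonpos hs00 hdet hr00 hS2 hc2 hqX2 hmaxY hg2pos
  have hH0lt : s00*(c2*(-r10)) + s01*(c2*r00) + u0 < 0 := by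
    rcases hH0le.lt_or_eq with h | h
    · exact h
    · exfalso; apply hTne
      have : (T0 - c2*(-r10))*s00 = 0 := by rw [hroot, h]; ring
      rcases mul_eq_zero.mp this with h' | h'
      · linarith [sub_eq_zero.mp h']
      · linarith
  have hbT : c2*(-r10) < T0 := by
    by_contra h; push_neg at h
    nlinarith [mul_nonneg (by linarith : (0:ℝ) ≤ c2*(-r10) - T0) hs00.le]
  -- b1 ≤ Y1
  have hY1b1 : c2*r00 ≤ Y1 := by
    rcases hG1 with ⟨hg1le, hc0, hd1⟩ | ⟨hg1pos, hc0, hd1⟩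
    · rw [← hd1, ← hcc1]; exact hCat1
    · have hbled1 : c2*r00 ≤ c1*(-r01) := by rw [← hcc1, ← hd1]; exact hCat1
      have hr01neg : r01 < 0 := by
        by_contra h; push_neg at h
        nlinarith [mul_nonneg hc1pos.le h]
      have h1 : (-r01)*(c1*r11) ≤ (-r01)*X1 :=
        mul_le_mul_of_nonneg_left ha0X (by linarith)
      have h3 : r11*(c1*(-r01)) < r11*Y1 := by nlinarith [h1, hg1pos]
      have := (mul_lt_mul_iff_right₀ hr11).mp h3
      linarith
  -- T0 ≤ c0
  have hT0c0 : T0 ≤ c0 := by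
    rcases hG1 with ⟨hg1le, hc0, hd1⟩ | ⟨hg1pos, hc0, hd1⟩
    · rw [hc0]; exact hmaxX _ _ hqTb
    · rw [hc0]
      by_cases hTg : r01*T0 + r11*(c2*r00) ≤ 0
      · exact (cap_bound hs00 hdet hr11 hS1 hc1 hqX1 hmaxX hg1pos hqTb.ge hTg).1
      · push_neg at hTg
        by_contra hTa
        push_neg at hTa
        have hbled1 : c2*r00 ≤ c1*(-r01) := by rw [← hcc1, ← hd1]; exact hCat1
        have hr01neg : r01 < 0 := by
          by_contra h; push_neg at h
          nlinarith [mul_nonneg hc1pos.le h]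
        have h1 : (-r01)*(c1*r11) < (-r01)*T0 :=
          mul_lt_mul_of_pos_left hTa (by linarith)
        have h3 : r11*(c1*(-r01)) < r11*(c2*r00) := by nlinarith [h1, hTg]
        have := (mul_lt_mul_iff_right₀ hr11).mp h3
        linarith
  have hc0pos : 0 < c0 := by
    rcases hG1 with ⟨hg1le, hc0, hd1⟩ | ⟨hg1pos, hc0, hd1⟩
    · rw [hc0]; linarith [ha0X, mul_pos hc1pos hr11]
    · rw [hc0]; exact mul_pos hc1pos hr11
  intro p0 p1
  constructor
  · rintro ⟨z0, z1, hz, hp0z, hp1z, hzc0, hzc1⟩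
    rw [hcc1] at hzc1
    have hzT0 := below_chord hs00 hdet hqX1 hmaxX qb hqTb hbT hY1b1 hz hzc1
    exact ⟨lt_of_lt_of_le hp0z hzT0, by rw [hT1]; linarith⟩
  · rintro ⟨hp0, hp1⟩
    have hT1pos : 0 < T1 := by rw [hT1]; exact hb1pos
    have hApos : 0 < (T0-p0)/(|T0|+1) := div_pos (by linarith) (by positivity)
    have hBpos : 0 < (T1-p1)/(|T1|+1) := div_pos (by linarith) (by positivity)
    obtain ⟨s, hs⟩ : ∃ s : ℝ, s = (1/2)*min 1 (min ((T0-p0)/(|T0|+1)) ((T1-p1)/(|T1|+1))) :=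
      ⟨_, rfl⟩
    have hs0 : 0 < s := by
      rw [hs]; have := lt_min one_pos (lt_min hApos hBpos); linarith
    have hs1 : s ≤ 1/2 := by
      rw [hs]; have := min_le_left (1:ℝ) (min ((T0-p0)/(|T0|+1)) ((T1-p1)/(|T1|+1))); linarith
    have hsA : s*(|T0|+1) ≤ (T0-p0)/2 := by
      have h1 : s ≤ (1/2)*((T0-p0)/(|T0|+1)) := by
        rw [hs]
        have := le_trans (min_le_right (1:ℝ) _) (min_le_left ((T0-p0)/(|T0|+1)) ((T1-p1)/(|T1|+1)))
        linarith
      have h2 : (0:ℝ) < |T0|+1 := by positivity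
      calc s*(|T0|+1) ≤ ((1/2)*((T0-p0)/(|T0|+1)))*(|T0|+1) :=
            mul_le_mul_of_nonneg_right h1 h2.le
        _ = (T0-p0)/2 := by field_simp
    have hsB : s*(|T1|+1) ≤ (T1-p1)/2 := by
      have h1 : s ≤ (1/2)*((T1-p1)/(|T1|+1)) := by
        rw [hs]
        have := le_trans (min_le_right (1:ℝ) _) (min_le_right ((T0-p0)/(|T0|+1)) ((T1-p1)/(|T1|+1)))
        linarith
      have h2 : (0:ℝ) < |T1|+1 := by positivity
      calc s*(|T1|+1) ≤ ((1/2)*((T1-p1)/(|T1|+1)))*(|T1|+1) :=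
            mul_le_mul_of_nonneg_right h1 h2.le
        _ = (T1-p1)/2 := by field_simp
    refine ⟨(1-s)*T0, (1-s)*T1, ?_, ?_, ?_, ?_, ?_⟩
    · have h := qcomb (s00 := s00) (s01 := s01) (s11 := s11) (u0 := u0) (u1 := u1)
        s T0 0 T1 0
      rw [qq_zero, hqT] at h
      rw [show (1-s)*T0 + s*0 = (1-s)*T0 by ring, show (1-s)*T1 + s*0 = (1-s)*T1 by ring] at h
      rw [h]
      have hQpos : 0 < Qq s00 s01 s11 (T0-0) (T1-0) :=
        Qq_pos hs00 hdet (Or.inr (by rw [sub_zero]; exact ne_of_gt hT1pos))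
      linarith [mul_pos (mul_pos hs0 (by linarith : (0:ℝ) < 1-s)) hQpos]
    · linarith [hsA, mul_le_mul_of_nonneg_left (le_abs_self T0) hs0.le]
    · linarith [hsB, mul_le_mul_of_nonneg_left (le_abs_self T1) hs0.le]
    · rcases le_or_gt T0 0 with h | h
      · nlinarith [mul_nonneg (by linarith : (0:ℝ) ≤ 1-s) (neg_nonneg.2 h)]
      · nlinarith [mul_pos hs0 h]
    · rw [hcc1, ← hT1]; linarith [mul_pos hs0 hT1pos]

lemma ltc_iff {p q : V} : ltc p q ↔ (p 0 < q 0 ∧ p 1 < q 1) := by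
  constructor
  · intro h; exact ⟨h 0, h 1⟩
  · rintro ⟨h0, h1⟩ i; fin_cases i
    · exact h0
    · exact h1

end Stmt2Aux

open Stmt2Aux

set_option maxHeartbeats 4000000 in
/-- explicit form of `𝒟^(1) ∩ 𝒟^(2)` in the three categories. -/
theorem stmt_2
    (S R : Matrix (Fin 2) (Fin 2) ℝ) (μ : V)
    (hSpd : S.PosDef) (hSsym : S.IsSymm) (hμ : μ ≠ 0)
    (hP : condP R) (hS : condS μ R)
    (θmax1 θmax2 tθ1r tθ2r : V)
    (hmax1 : gam S μ θmax1 = 0 ∧ ∀ θ, gam S μ θ = 0 → θ 0 ≤ θmax1 0)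
    (hmax2 : gam S μ θmax2 = 0 ∧ ∀ θ, gam S μ θ = 0 → θ 1 ≤ θmax2 1)
    (htθ1r : (θray1 S μ R = θmax1 ∧ tθ1r = θmax1) ∨
      (θray1 S μ R ≠ θmax1 ∧ gam S μ tθ1r = 0 ∧
        tθ1r 0 = θray1 S μ R 0 ∧ tθ1r 1 ≠ θray1 S μ R 1))
    (htθ2r : (θray2 S μ R = θmax2 ∧ tθ2r = θmax2) ∨
      (θray2 S μ R ≠ θmax2 ∧ gam S μ tθ2r = 0 ∧
        tθ2r 1 = θray2 S μ R 1 ∧ tθ2r 0 ≠ θray2 S μ R 0))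
    (θΓ1 θΓ2 : V)
    (hθΓ1 : θΓ1 = if gam2 R θmax1 ≤ 0 then θmax1 else θray1 S μ R)
    (hθΓ2 : θΓ2 = if gam1 R θmax2 ≤ 0 then θmax2 else θray2 S μ R) :
    -- general intersection formula
    (Dset S μ 0 (θΓ1 0) ∩ Dset S μ 1 (θΓ2 1) =
        {θ | ∃ θ' ∈ Gam S μ, ltc θ θ' ∧ θ' 0 < θΓ1 0 ∧ θ' 1 < θΓ2 1}) ∧
    -- Category I
    (θΓ2 0 < θΓ1 0 → θΓ1 1 < θΓ2 1 →
        Dset S μ 0 (θΓ1 0) ∩ Dset S μ 1 (θΓ2 1) =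
          {θ ∈ Gmax S μ | θ 0 < θΓ1 0 ∧ θ 1 < θΓ2 1}) ∧
    -- Category II
    ((∀ i, θΓ2 i ≤ θΓ1 i) →
        Dset S μ 0 (θΓ1 0) ∩ Dset S μ 1 (θΓ2 1) = {θ | ltc θ tθ2r}) ∧
    -- Category III
    ((∀ i, θΓ1 i ≤ θΓ2 i) →
        Dset S μ 0 (θΓ1 0) ∩ Dset S μ 1 (θΓ2 1) = {θ | ltc θ tθ1r}) := by
  classical
  obtain ⟨hr00, hr11, hrdet⟩ := hP
  obtain ⟨hS1v, hS2v⟩ := hS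
  have hsym : S 1 0 = S 0 1 := hSsym.apply 0 1
  have hq : ∀ θ : V, gam S μ θ = qq (S 0 0) (S 0 1) (S 1 1) (μ 0) (μ 1) (θ 0) (θ 1) := by
    intro θ
    simp only [gam, qq, Qq, dotProduct, Matrix.mulVec, Fin.sum_univ_two]
    linear_combination (-(1/2) * θ 0 * θ 1) * hsym
  have hs00 : 0 < S 0 0 := by
    have h := hSpd.dotProduct_mulVec_pos (x := ![1,0]) (by intro hc; have := congrFun hc 0; simp at this)
    simp [dotProduct, Matrix.mulVec, Fin.sum_univ_two] at h
    linarith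
  have hs11 : 0 < S 1 1 := by
    have h := hSpd.dotProduct_mulVec_pos (x := ![0,1]) (by intro hc; have := congrFun hc 1; simp at this)
    simp [dotProduct, Matrix.mulVec, Fin.sum_univ_two] at h
    linarith
  have hdet : 0 < S 0 0 * S 1 1 - (S 0 1)^2 := by
    have h := hSpd.dotProduct_mulVec_pos (x := ![S 1 1, -(S 0 1)])
      (by intro hc; have := congrFun hc 0; simp at this; linarith)
    simp [dotProduct, Matrix.mulVec, Fin.sum_univ_two] at h
    rw [hsym] at h
    by_contra hc
    push_neg at hc
    nlinarith [h, mul_nonneg hs11.le (by linarith : (0:ℝ) ≤ -(S 0 0 * S 1 1 - S 0 1^2))]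
  have hdet2 : 0 < S 1 1 * S 0 0 - (S 0 1)^2 := by nlinarith [hdet]
  have hu : μ 0 ≠ 0 ∨ μ 1 ≠ 0 := by
    by_contra h
    push_neg at h
    apply hμ
    funext i; fin_cases i
    · exact h.1
    · exact h.2
  have hS1 : μ 0 * R 1 1 - μ 1 * R 0 1 < 0 := by
    have := hS1v; linarith
  have hS2 : μ 1 * R 0 0 - μ 0 * R 1 0 < 0 := by linarith [hS2v]
  -- max points in scalar form
  have hqm1 : qq (S 0 0) (S 0 1) (S 1 1) (μ 0) (μ 1) (θmax1 0) (θmax1 1) = 0 := by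
    rw [← hq]; exact hmax1.1
  have hmaxX : ∀ x y, qq (S 0 0) (S 0 1) (S 1 1) (μ 0) (μ 1) x y = 0 → x ≤ θmax1 0 := by
    intro x y h
    have := hmax1.2 ![x,y] (by rw [hq]; simpa using h)
    simpa using this
  have hqm2 : qq (S 0 0) (S 0 1) (S 1 1) (μ 0) (μ 1) (θmax2 0) (θmax2 1) = 0 := by
    rw [← hq]; exact hmax2.1
  have hmaxY : ∀ x y, qq (S 0 0) (S 0 1) (S 1 1) (μ 0) (μ 1) x y = 0 → y ≤ θmax2 1 := by
    intro x y h
    have := hmax2.2 ![x,y] (by rw [hq]; simpa using h)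
    simpa using this
  -- ray 1
  have hmu1 : μ ⬝ᵥ pvec1 R = μ 0 * R 1 1 - μ 1 * R 0 1 := by
    simp [pvec1, dotProduct, Fin.sum_univ_two]; ring
  have hqv1 : pvec1 R ⬝ᵥ S.mulVec (pvec1 R)
      = Qq (S 0 0) (S 0 1) (S 1 1) (R 1 1) (-(R 0 1)) := by
    simp only [pvec1, dotProduct, Matrix.mulVec, Fin.sum_univ_two, Qq,
      Matrix.cons_val_zero, Matrix.cons_val_one, Matrix.head_cons]
    linear_combination (R 1 1 * (-(R 0 1))) * hsym
  have hqp1pos : 0 < Qq (S 0 0) (S 0 1) (S 1 1) (R 1 1) (-(R 0 1)) :=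
    Qq_pos hs00 hdet (Or.inl hr11.ne')
  obtain ⟨C1, hC1d⟩ : ∃ c : ℝ,
      c = -2*(μ 0 * R 1 1 - μ 1 * R 0 1)/(Qq (S 0 0) (S 0 1) (S 1 1) (R 1 1) (-(R 0 1))) :=
    ⟨_, rfl⟩
  have hC1 : C1 * Qq (S 0 0) (S 0 1) (S 1 1) (R 1 1) (-(R 0 1))
      = -2*(μ 0 * R 1 1 - μ 1 * R 0 1) := by
    rw [hC1d]; field_simp
  have hray1_0 : θray1 S μ R 0 = C1 * R 1 1 := by
    simp only [θray1, Pi.smul_apply, smul_eq_mul]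
    rw [hmu1, hqv1, show pvec1 R 0 = R 1 1 from by simp [pvec1], hC1d]
  have hray1_1 : θray1 S μ R 1 = C1 * (-(R 0 1)) := by
    simp only [θray1, Pi.smul_apply, smul_eq_mul]
    rw [hmu1, hqv1, show pvec1 R 1 = -(R 0 1) from by simp [pvec1], hC1d]
  have hC1pos : 0 < C1 := by
    by_contra h
    push_neg at h
    nlinarith [mul_nonneg (neg_nonneg.2 h) hqp1pos.le]
  -- ray 2
  have hmu2 : μ ⬝ᵥ pvec2 R = μ 1 * R 0 0 - μ 0 * R 1 0 := by
    simp [pvec2, dotProduct, Fin.sum_univ_two]; ring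
  have hqv2 : pvec2 R ⬝ᵥ S.mulVec (pvec2 R)
      = Qq (S 0 0) (S 0 1) (S 1 1) (-(R 1 0)) (R 0 0) := by
    simp only [pvec2, dotProduct, Matrix.mulVec, Fin.sum_univ_two, Qq,
      Matrix.cons_val_zero, Matrix.cons_val_one, Matrix.head_cons]
    linear_combination ((-(R 1 0)) * R 0 0) * hsym
  have hqp2pos : 0 < Qq (S 0 0) (S 0 1) (S 1 1) (-(R 1 0)) (R 0 0) :=
    Qq_pos hs00 hdet (Or.inr hr00.ne')
  obtain ⟨C2, hC2d⟩ : ∃ c : ℝ,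
      c = -2*(μ 1 * R 0 0 - μ 0 * R 1 0)/(Qq (S 0 0) (S 0 1) (S 1 1) (-(R 1 0)) (R 0 0)) :=
    ⟨_, rfl⟩
  have hC2 : C2 * Qq (S 0 0) (S 0 1) (S 1 1) (-(R 1 0)) (R 0 0)
      = -2*(μ 1 * R 0 0 - μ 0 * R 1 0) := by
    rw [hC2d]; field_simp
  have hray2_0 : θray2 S μ R 0 = C2 * (-(R 1 0)) := by
    simp only [θray2, Pi.smul_apply, smul_eq_mul]
    rw [hmu2, hqv2, show pvec2 R 0 = -(R 1 0) from by simp [pvec2], hC2d]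
  have hray2_1 : θray2 S μ R 1 = C2 * (R 0 0) := by
    simp only [θray2, Pi.smul_apply, smul_eq_mul]
    rw [hmu2, hqv2, show pvec2 R 1 = R 0 0 from by simp [pvec2], hC2d]
  have hC2pos : 0 < C2 := by
    by_contra h
    push_neg at h
    nlinarith [mul_nonneg (neg_nonneg.2 h) hqp2pos.le]
  have qa : qq (S 0 0) (S 0 1) (S 1 1) (μ 0) (μ 1) (C1*(R 1 1)) (C1*(-(R 0 1))) = 0 :=
    ray_on hC1
  have qbv : qq (S 0 0) (S 0 1) (S 1 1) (μ 0) (μ 1) (C2*(-(R 1 0))) (C2*(R 0 0)) = 0 :=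
    ray_on2 hC2
  -- θΓ case data
  have hG1' : (R 0 1*(θmax1 0) + R 1 1*(θmax1 1) ≤ 0 ∧ θΓ1 0 = θmax1 0 ∧ θΓ1 1 = θmax1 1)
      ∨ (0 < R 0 1*(θmax1 0) + R 1 1*(θmax1 1) ∧ θΓ1 0 = C1*(R 1 1) ∧ θΓ1 1 = C1*(-(R 0 1))) := by
    by_cases hcond : gam2 R θmax1 ≤ 0
    · left
      rw [hθΓ1, if_pos hcond]
      exact ⟨by simpa [gam2] using hcond, rfl, rfl⟩
    · right
      rw [hθΓ1, if_neg hcond]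
      push_neg at hcond
      exact ⟨by simpa [gam2] using hcond, hray1_0, hray1_1⟩
  have hG2' : (R 0 0*(θmax2 0) + R 1 0*(θmax2 1) ≤ 0 ∧ θΓ2 0 = θmax2 0 ∧ θΓ2 1 = θmax2 1)
      ∨ (0 < R 0 0*(θmax2 0) + R 1 0*(θmax2 1) ∧ θΓ2 0 = C2*(-(R 1 0)) ∧ θΓ2 1 = C2*(R 0 0)) := by
    by_cases hcond : gam1 R θmax2 ≤ 0
    · left
      rw [hθΓ2, if_pos hcond]
      exact ⟨by simpa [gam1] using hcond, rfl, rfl⟩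
    · right
      rw [hθΓ2, if_neg hcond]
      push_neg at hcond
      exact ⟨by simpa [gam1] using hcond, hray2_0, hray2_1⟩
  have hc0pos : 0 < θΓ1 0 := by
    rcases hG1' with ⟨_, h0, _⟩ | ⟨_, h0, _⟩
    · rw [h0]
      have := hmaxX _ _ qa
      nlinarith [mul_pos hC1pos hr11]
    · rw [h0]; exact mul_pos hC1pos hr11
  have hcc1pos : 0 < θΓ2 1 := by
    rcases hG2' with ⟨_, _, h1⟩ | ⟨_, _, h1⟩
    · rw [h1]
      have := hmaxY _ _ qbv
      nlinarith [mul_pos hC2pos hr00]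
    · rw [h1]; exact mul_pos hC2pos hr00
  -- Part 1
  have hkey : Dset S μ 0 (θΓ1 0) ∩ Dset S μ 1 (θΓ2 1) =
      {θ | ∃ θ' ∈ Gam S μ, ltc θ θ' ∧ θ' 0 < θΓ1 0 ∧ θ' 1 < θΓ2 1} := by
    ext p
    simp only [Set.mem_inter_iff, Dset, Gam, Set.mem_setOf_eq, ltc_iff]
    constructor
    · rintro ⟨⟨a, ha, ⟨ha0', ha1'⟩, ha0⟩, ⟨b, hb, ⟨hb0', hb1'⟩, hb1⟩⟩
      rw [hq] at ha hb
      obtain ⟨z0, z1, hz, h1, h2, h3, h4⟩ :=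
        combine hs00 hdet hc0pos hcc1pos ha ha0' ha1' ha0 hb hb0' hb1' hb1
      exact ⟨![z0,z1], by rw [hq]; simpa using hz, ⟨by simpa using h1, by simpa using h2⟩,
        by simpa using h3, by simpa using h4⟩
    · rintro ⟨z, hz, hltz, h0, h1⟩
      exact ⟨⟨z, hz, hltz, h0⟩, ⟨z, hz, hltz, h1⟩⟩
  refine ⟨hkey, ?_, ?_, ?_⟩
  · -- Category I
    intro hI1 hI2
    have hqΓ1 : qq (S 0 0) (S 0 1) (S 1 1) (μ 0) (μ 1) (θΓ1 0) (θΓ1 1) = 0 := by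
      rcases hG1' with ⟨_, h0, h1⟩ | ⟨_, h0, h1⟩ <;> rw [h0, h1]
      · exact hqm1
      · exact qa
    have hqΓ2 : qq (S 0 0) (S 0 1) (S 1 1) (μ 0) (μ 1) (θΓ2 0) (θΓ2 1) = 0 := by
      rcases hG2' with ⟨_, h0, h1⟩ | ⟨_, h0, h1⟩ <;> rw [h0, h1]
      · exact hqm2
      · exact qbv
    ext p
    simp only [Set.mem_inter_iff, Dset, Gam, Gmax, Set.mem_setOf_eq, ltc_iff,
      Set.mem_sep_iff]
    constructor
    · rintro ⟨⟨a, ha, ⟨ha0', ha1'⟩, ha0⟩, ⟨b, hb, ⟨hb0', hb1'⟩, hb1⟩⟩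
      exact ⟨⟨a, ha, ha0', ha1'⟩, lt_trans ha0' ha0, lt_trans hb1' hb1⟩
    · rintro ⟨⟨w, hw, hltw0, hltw1⟩, h0, h1⟩
      rw [hq] at hw
      constructor
      · by_cases hw0 : w 0 < θΓ1 0
        · exact ⟨w, by rw [hq]; exact hw, ⟨hltw0, hltw1⟩, hw0⟩
        · push_neg at hw0
          obtain ⟨z0, z1, hz, g1, g2, g3⟩ :=
            pull hs00 hdet hw hltw0 hltw1 hqΓ2 hI1 h1 hw0 h0
          exact ⟨![z0,z1], by rw [hq]; simpa using hz, ⟨by simpa using g1, by simpa using g2⟩,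
            by simpa using g3⟩
      · by_cases hw1 : w 1 < θΓ2 1
        · exact ⟨w, by rw [hq]; exact hw, ⟨hltw0, hltw1⟩, hw1⟩
        · push_neg at hw1
          have hw' : 0 < qq (S 1 1) (S 0 1) (S 0 0) (μ 1) (μ 0) (w 1) (w 0) := by
            rw [← qq_swap]; exact hw
          have hqΓ1' : qq (S 1 1) (S 0 1) (S 0 0) (μ 1) (μ 0) (θΓ1 1) (θΓ1 0) = 0 := by
            rw [← qq_swap]; exact hqΓ1
          obtain ⟨z0, z1, hz, g1, g2, g3⟩ :=
            pull hs11 hdet2 hw' hltw1 hltw0 hqΓ1' hI2 h0 hw1 h1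
          have hz' : 0 < qq (S 0 0) (S 0 1) (S 1 1) (μ 0) (μ 1) z1 z0 := by
            rw [qq_swap]; exact hz
          exact ⟨![z1,z0], by rw [hq]; simpa using hz', ⟨by simpa using g2, by simpa using g1⟩,
            by simpa using g3⟩
  · -- Category II
    intro hII
    have hT' : (C2*(-(R 1 0)) = θmax2 0 ∧ C2*(R 0 0) = θmax2 1 ∧ tθ2r 0 = θmax2 0 ∧
          tθ2r 1 = θmax2 1)
        ∨ (qq (S 0 0) (S 0 1) (S 1 1) (μ 0) (μ 1) (tθ2r 0) (tθ2r 1) = 0 ∧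
          tθ2r 1 = C2*(R 0 0) ∧ tθ2r 0 ≠ C2*(-(R 1 0))) := by
      rcases htθ2r with ⟨he, ht⟩ | ⟨hne, hq0, ht1, ht0⟩
      · left
        exact ⟨by rw [← hray2_0]; exact congrFun he 0, by rw [← hray2_1]; exact congrFun he 1,
          congrFun ht 0, congrFun ht 1⟩
      · right
        exact ⟨by rw [← hq]; exact hq0, by rw [← hray2_1]; exact ht1,
          by rw [← hray2_0]; exact ht0⟩
    have hiff := catII_scalar hs00 hdet hu hr00 hr11 hrdet hS1 hS2 hC1 hC2
      hqm1 hmaxX hqm2 hmaxY hG1' hG2' hT' (hII 0) (hII 1)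
    rw [hkey]
    ext p
    simp only [Set.mem_setOf_eq, Gam, ltc_iff]
    constructor
    · rintro ⟨z, hz, ⟨h0', h1'⟩, h0, h1⟩
      rw [hq] at hz
      exact (hiff (p 0) (p 1)).mp ⟨z 0, z 1, hz, h0', h1', h0, h1⟩
    · rintro ⟨h0, h1⟩
      obtain ⟨z0, z1, hz, a1, a2, a3, a4⟩ := (hiff (p 0) (p 1)).mpr ⟨h0, h1⟩
      exact ⟨![z0,z1], by rw [hq]; simpa using hz, ⟨by simpa using a1, by simpa using a2⟩,
        by simpa using a3, by simpa using a4⟩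
  · -- Category III
    intro hIII
    have hqm2' : qq (S 1 1) (S 0 1) (S 0 0) (μ 1) (μ 0) (θmax2 1) (θmax2 0) = 0 := by
      rw [← qq_swap]; exact hqm2
    have hmaxX' : ∀ x y, qq (S 1 1) (S 0 1) (S 0 0) (μ 1) (μ 0) x y = 0 → x ≤ θmax2 1 := by
      intro x y h; exact hmaxY y x (by rw [qq_swap]; exact h)
    have hqm1' : qq (S 1 1) (S 0 1) (S 0 0) (μ 1) (μ 0) (θmax1 1) (θmax1 0) = 0 := by
      rw [← qq_swap]; exact hqm1
    have hmaxY' : ∀ x y, qq (S 1 1) (S 0 1) (S 0 0) (μ 1) (μ 0) x y = 0 → y ≤ θmax1 0 := by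
      intro x y h; exact hmaxX y x (by rw [qq_swap]; exact h)
    have hC2' : C2 * Qq (S 1 1) (S 0 1) (S 0 0) (R 0 0) (-(R 1 0))
        = -2*(μ 1*R 0 0 - μ 0*R 1 0) := by
      rw [show Qq (S 1 1) (S 0 1) (S 0 0) (R 0 0) (-(R 1 0))
          = Qq (S 0 0) (S 0 1) (S 1 1) (-(R 1 0)) (R 0 0) from by simp only [Qq]; ring]
      exact hC2
    have hC1' : C1 * Qq (S 1 1) (S 0 1) (S 0 0) (-(R 0 1)) (R 1 1)
        = -2*(μ 0*R 1 1 - μ 1*R 0 1) := by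
      rw [show Qq (S 1 1) (S 0 1) (S 0 0) (-(R 0 1)) (R 1 1)
          = Qq (S 0 0) (S 0 1) (S 1 1) (R 1 1) (-(R 0 1)) from by simp only [Qq]; ring]
      exact hC1
    have hG1s : (R 1 0*(θmax2 1) + R 0 0*(θmax2 0) ≤ 0 ∧ θΓ2 1 = θmax2 1 ∧ θΓ2 0 = θmax2 0)
        ∨ (0 < R 1 0*(θmax2 1) + R 0 0*(θmax2 0) ∧ θΓ2 1 = C2*(R 0 0) ∧
           θΓ2 0 = C2*(-(R 1 0))) := by
      rcases hG2' with ⟨h, e0, e1⟩ | ⟨h, e0, e1⟩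
      · left; exact ⟨by linarith, e1, e0⟩
      · right; exact ⟨by linarith, e1, e0⟩
    have hG2s : (R 1 1*(θmax1 1) + R 0 1*(θmax1 0) ≤ 0 ∧ θΓ1 1 = θmax1 1 ∧ θΓ1 0 = θmax1 0)
        ∨ (0 < R 1 1*(θmax1 1) + R 0 1*(θmax1 0) ∧ θΓ1 1 = C1*(-(R 0 1)) ∧
           θΓ1 0 = C1*(R 1 1)) := by
      rcases hG1' with ⟨h, e0, e1⟩ | ⟨h, e0, e1⟩
      · left; exact ⟨by linarith, e1, e0⟩
      · right; exact ⟨by linarith, e1, e0⟩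
    have hTs : (C1*(-(R 0 1)) = θmax1 1 ∧ C1*(R 1 1) = θmax1 0 ∧ tθ1r 1 = θmax1 1 ∧
          tθ1r 0 = θmax1 0)
        ∨ (qq (S 1 1) (S 0 1) (S 0 0) (μ 1) (μ 0) (tθ1r 1) (tθ1r 0) = 0 ∧
          tθ1r 0 = C1*(R 1 1) ∧ tθ1r 1 ≠ C1*(-(R 0 1))) := by
      rcases htθ1r with ⟨he, ht⟩ | ⟨hne, hq0, ht0eq, ht1ne⟩
      · left
        exact ⟨by rw [← hray1_1]; exact congrFun he 1, by rw [← hray1_0]; exact congrFun he 0,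
          congrFun ht 1, congrFun ht 0⟩
      · right
        refine ⟨?_, by rw [← hray1_0]; exact ht0eq, by rw [← hray1_1]; exact ht1ne⟩
        rw [← qq_swap, ← hq]
        exact hq0
    have hrdet' : 0 < R 1 1*R 0 0 - R 1 0*R 0 1 := by linarith
    have hiff := catII_scalar hs11 hdet2 hu.symm hr11 hr00 hrdet' hS2 hS1 hC2' hC1'
      hqm2' hmaxX' hqm1' hmaxY' hG1s hG2s hTs (hIII 1) (hIII 0)
    rw [hkey]
    ext p
    simp only [Set.mem_setOf_eq, Gam, ltc_iff]
    constructor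
    · rintro ⟨z, hz, ⟨h0', h1'⟩, h0, h1⟩
      rw [hq] at hz
      have hz' : 0 < qq (S 1 1) (S 0 1) (S 0 0) (μ 1) (μ 0) (z 1) (z 0) := by
        rw [← qq_swap]; exact hz
      have := (hiff (p 1) (p 0)).mp ⟨z 1, z 0, hz', h1', h0', h1, h0⟩
      exact ⟨this.2, this.1⟩
    · rintro ⟨h0, h1⟩
      obtain ⟨z0, z1, hz, a1, a2, a3, a4⟩ := (hiff (p 1) (p 0)).mpr ⟨h1, h0⟩
      have hz' : 0 < qq (S 0 0) (S 0 1) (S 1 1) (μ 0) (μ 1) z1 z0 := by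
        rw [qq_swap]; exact hz
      exact ⟨![z1,z0], by rw [hq]; simpa using hz', ⟨by simpa using a2, by simpa using a1⟩,
        by simpa using a4, by simpa using a3⟩
end
end
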